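/- arXiv:1905.02883 — 3 statements merged into one kernel-verified Lean document; each statement's English description precedes it below -/
import Mathlib

section
/- Let (Ω,μ) = ∏_{i=1}^n (Ω_i,μ_i) be a finite product probability space in which each factor Ω_i is partially ordered and each μ_i is positively associated. Let A_1,…,A_k ⊆ Ω be events that are all increasing, and define X(ω) = max{|I| : I ⊆ [k] and A_i, i ∈ I, occur disjointly at ω}. Let Y_1,…,Y_k be independent Bernoulli random variables with E Y_i = μ(A_i) and Y = Y_1 + ⋯ + Y_k. Then X is stochastically dominated by Y; that is, for every r ∈ ℝ, μ({ω : X(ω) ≥ r}) ≤ Pr(Y ≥ r). -/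
open MeasureTheory ProbabilityTheory

/-- The events `A j`, `j ∈ I`, occur disjointly at `ω`: there are pairwise disjoint
sets `S j ⊆ [n]` such that every `ω'` agreeing with `ω` on `S j` lies in `A j`. -/
def OccurDisjointly {n : ℕ} {Ω : Fin n → Type*} {ι : Type*}
    (A : ι → Set (∀ i, Ω i)) (I : Finset ι) (ω : ∀ i, Ω i) : Prop :=
  ∃ S : ι → Finset (Fin n),
    (∀ j ∈ I, ∀ j' ∈ I, j ≠ j' → Disjoint (S j) (S j')) ∧
    ∀ j ∈ I, ∀ ω' : ∀ i, Ω i, (∀ i ∈ S j, ω' i = ω i) → ω' ∈ A j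

/-- `X ω` is the maximum size of a set `I ⊆ [k]` such that the events
`A j`, `j ∈ I`, occur disjointly at `ω`. -/
noncomputable def maxDisjOcc {n k : ℕ} {Ω : Fin n → Type*}
    (A : Fin k → Set (∀ i, Ω i)) (ω : ∀ i, Ω i) : ℕ :=
  sSup {m : ℕ | ∃ I : Finset (Fin k), I.card = m ∧ OccurDisjointly A I ω}

/-- A probability measure on a partially ordered space is positively associated if
`m A * m B ≤ m (A ∩ B)` for all increasing (upper) sets `A, B`. -/
def PositivelyAssociated {Γ : Type*} [Preorder Γ] [MeasurableSpace Γ]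
    (m : Measure Γ) : Prop :=
  ∀ A B : Set Γ, IsUpperSet A → IsUpperSet B → m A * m B ≤ m (A ∩ B)

open Function
open scoped ENNReal
set_option linter.unusedSectionVars false
set_option linter.unusedVariables false
set_option maxHeartbeats 1000000



section Cert
variable {n : ℕ} {Ω : Fin n → Type*}

def Cert (A : Set (∀ i, Ω i)) (S : Finset (Fin n)) (ω : ∀ i, Ω i) : Prop :=
  ∀ ω' : ∀ i, Ω i, (∀ i ∈ S, ω' i = ω i) → ω' ∈ A

lemma Cert.mem {A : Set (∀ i, Ω i)} {S : Finset (Fin n)} {ω : ∀ i, Ω i}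
    (h : Cert A S ω) : ω ∈ A := h ω (fun _ _ => rfl)

lemma Cert.of_agree {A : Set (∀ i, Ω i)} {S : Finset (Fin n)} {ω τ : ∀ i, Ω i}
    (h : Cert A S ω) (hag : ∀ i ∈ S, τ i = ω i) : Cert A S τ := by
  intro ω' hω'
  exact h ω' (fun i hi => (hω' i hi).trans (hag i hi))

lemma Cert.mono_point [∀ i, Preorder (Ω i)] {A : Set (∀ i, Ω i)}
    (hA : IsUpperSet A) {S : Finset (Fin n)} {x y : ∀ i, Ω i}
    (hxy : x ≤ y) (h : Cert A S x) : Cert A S y := by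
  classical
  intro ω' hω'
  have hmem : (fun i => if i ∈ S then x i else ω' i) ∈ A := by
    refine h _ (fun i hi => by simp [hi])
  refine hA (fun i => ?_) hmem
  by_cases hi : i ∈ S
  · simpa [hi, hω' i hi] using hxy i
  · simp [hi]

/-- the "mix" point: coordinates in `K` from `τ`, the rest from `ω`. -/
def mix (K : Finset (Fin n)) (τ ω : ∀ i, Ω i) : ∀ i, Ω i :=
  fun i => if i ∈ K then τ i else ω i

@[simp] lemma mix_empty (τ ω : ∀ i, Ω i) : mix ∅ τ ω = ω := by
  funext i; simp [mix]

@[simp] lemma mix_univ (τ ω : ∀ i, Ω i) : mix Finset.univ τ ω = τ := by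
  funext i; simp [mix]

lemma mix_update_update {K : Finset (Fin n)} {k : Fin n} (hk : k ∉ K)
    (τ ω : ∀ i, Ω i) (s : Ω k) (t : Ω k) :
    mix K (update τ k t) (update ω k s) = update (mix K τ ω) k s := by
  funext i
  rcases eq_or_ne i k with rfl | hik
  · simp [mix, hk]
  · simp [mix, update_of_ne hik]

lemma mix_insert_update {K : Finset (Fin n)} {k : Fin n} (hk : k ∉ K)
    (τ ω : ∀ i, Ω i) (s : Ω k) (t : Ω k) :
    mix (insert k K) (update τ k t) (update ω k s) = update (mix K τ ω) k t := by
  funext i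
  rcases eq_or_ne i k with rfl | hik
  · simp [mix]
  · simp [mix, update_of_ne hik, Finset.mem_insert, hik]

/-- The hybrid event in the duplicated space. -/
def EK (A G H : Set (∀ i, Ω i)) (K : Finset (Fin n)) : Set ((∀ i, Ω i) × (∀ i, Ω i)) :=
  {p | (∃ S T : Finset (Fin n), Disjoint (S \ K) (T \ K) ∧
          Cert A S p.1 ∧ Cert G T (mix K p.2 p.1)) ∧ mix K p.2 p.1 ∉ H}

/-- Disjoint occurrence of `A` and `G`, intersected with `Hᶜ`. -/
def Box2Not (A G H : Set (∀ i, Ω i)) : Set (∀ i, Ω i) :=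
  {ω | (∃ S T : Finset (Fin n), Disjoint S T ∧ Cert A S ω ∧ Cert G T ω) ∧ ω ∉ H}

section Fixed
variable (A G H : Set (∀ i, Ω i)) (K : Finset (Fin n)) (k : Fin n) (ω τ : ∀ i, Ω i)

def Uset : Set (Ω k) :=
  {s | ∃ S T : Finset (Fin n), k ∈ S ∧ k ∉ T ∧
    Disjoint (S \ insert k K) (T \ insert k K) ∧
    Cert A S (update ω k s) ∧ Cert G T (mix K τ ω)}

def Vset : Set (Ω k) :=
  {t | ∃ S T : Finset (Fin n), k ∉ S ∧
    Disjoint (S \ insert k K) (T \ insert k K) ∧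
    Cert A S ω ∧ Cert G T (update (mix K τ ω) k t)}

def Wset : Set (Ω k) := {t | update (mix K τ ω) k t ∈ H}

variable {A G H K k ω τ}

lemma F1 (hk : k ∉ K) {s t : Ω k}
    (h : (update ω k s, update τ k t) ∈ EK A G H K) :
    s ∈ (Uset A G K k ω τ ∪ Vset A G K k ω τ) ∩ (Wset H K k ω τ)ᶜ := by
  obtain ⟨⟨S, T, hdisj, hcA, hcG⟩, hH⟩ := h
  rw [mix_update_update hk] at hcG hH
  have hdisj' : Disjoint (S \ insert k K) (T \ insert k K) :=
    hdisj.mono (Finset.sdiff_subset_sdiff le_rfl (Finset.subset_insert k K))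
      (Finset.sdiff_subset_sdiff le_rfl (Finset.subset_insert k K))
  constructor
  · by_cases hkS : k ∈ S
    · left
      have hkT : k ∉ T := by
        intro hkT
        exact (Finset.disjoint_left.mp hdisj (Finset.mem_sdiff.mpr ⟨hkS, hk⟩))
          (Finset.mem_sdiff.mpr ⟨hkT, hk⟩)
      refine ⟨S, T, hkS, hkT, hdisj', hcA, hcG.of_agree (fun i hi => ?_)⟩
      exact (update_of_ne (show i ≠ k from fun h => hkT (h ▸ hi)) _ _).symm
    · right
      refine ⟨S, T, hkS, hdisj', hcA.of_agree (fun i hi => ?_), hcG⟩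
      exact (update_of_ne (show i ≠ k from fun h => hkS (h ▸ hi)) _ _).symm
  · exact hH

lemma F2 (hk : k ∉ K) {s t : Ω k}
    (hU : s ∈ Uset A G K k ω τ) (hW : t ∉ Wset H K k ω τ) :
    (update ω k s, update τ k t) ∈ EK A G H (insert k K) := by
  obtain ⟨S, T, hkS, hkT, hdisj, hcA, hcG⟩ := hU
  refine ⟨⟨S, T, hdisj, hcA, ?_⟩, ?_⟩
  · rw [mix_insert_update hk]
    exact hcG.of_agree (fun i hi => update_of_ne (show i ≠ k from fun h => hkT (h ▸ hi)) _ _)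
  · rw [mix_insert_update hk]
    exact hW

lemma F3 (hk : k ∉ K) {s t : Ω k}
    (hV : t ∈ Vset A G K k ω τ) (hW : t ∉ Wset H K k ω τ) :
    (update ω k s, update τ k t) ∈ EK A G H (insert k K) := by
  obtain ⟨S, T, hkS, hdisj, hcA, hcG⟩ := hV
  refine ⟨⟨S, T, hdisj, ?_, ?_⟩, ?_⟩
  · exact hcA.of_agree (fun i hi => update_of_ne (show i ≠ k from fun h => hkS (h ▸ hi)) _ _)
  · rw [mix_insert_update hk]
    exact hcG
  · rw [mix_insert_update hk]
    exact hW

variable [∀ i, PartialOrder (Ω i)]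

lemma update_le_update {k : Fin n} {s s' : Ω k} (h : s ≤ s') :
    update ω k s ≤ update ω k s' := by
  intro i
  rcases eq_or_ne i k with rfl | hik
  · simpa using h
  · simp [update_of_ne hik]

lemma Uset_upper (hA : IsUpperSet A) : IsUpperSet (Uset A G K k ω τ) := by
  intro s s' hss' ⟨S, T, hkS, hkT, hdisj, hcA, hcG⟩
  exact ⟨S, T, hkS, hkT, hdisj, hcA.mono_point hA (update_le_update hss'), hcG⟩

lemma Vset_upper (hG : IsUpperSet G) : IsUpperSet (Vset A G K k ω τ) := by
  intro t t' htt' ⟨S, T, hkS, hdisj, hcA, hcG⟩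
  exact ⟨S, T, hkS, hdisj, hcA, hcG.mono_point hG (update_le_update htt')⟩

lemma Wset_upper (hH : IsUpperSet H) : IsUpperSet (Wset H K k ω τ) := by
  intro t t' htt' hmem
  exact hH (update_le_update htt') hmem

end Fixed
end Cert


section FinMeas

variable {γ : Type*} [Fintype γ] [MeasurableSpace γ] [MeasurableSingletonClass γ]

open Classical in
/-- `ℝ≥0∞`-valued indicator. -/
noncomputable def ind {α : Type*} (X : Set α) (x : α) : ℝ≥0∞ := if x ∈ X then 1 else 0

lemma ind_le_one {α : Type*} (X : Set α) (x : α) : ind X x ≤ 1 := by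
  unfold ind; split <;> simp

lemma ind_mono {α : Type*} {X Y : Set α} (h : X ⊆ Y) (x : α) : ind X x ≤ ind Y x := by
  unfold ind; split
  · simp [h ‹x ∈ X›]
  · simp

lemma ind_of_mem {α : Type*} {X : Set α} {x : α} (h : x ∈ X) : ind X x = 1 := by
  simp [ind, h]

lemma ind_of_not_mem {α : Type*} {X : Set α} {x : α} (h : x ∉ X) : ind X x = 0 := by
  simp [ind, h]

lemma allMeasurable (X : Set γ) : MeasurableSet X :=
  (Set.to_countable X).measurableSet

lemma meas_eq_sum (m : Measure γ) (X : Set γ) :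
    m X = ∑ x : γ, ind X x * m {x} := by
  classical
  have hX : X = ⋃ x ∈ Finset.univ.filter (· ∈ X), ({x} : Set γ) := by
    ext y; simp
  rw [hX, measure_biUnion_finset ?_ (fun x _ => allMeasurable {x})]
  · rw [Finset.sum_filter]
    refine Finset.sum_congr rfl (fun x _ => ?_)
    unfold ind
    split <;> simp_all
  · intro a _ b _ hab
    simp [Set.disjoint_singleton, hab]

lemma sum_singleton_eq_one (m : Measure γ) [IsProbabilityMeasure m] :
    ∑ x : γ, m {x} = 1 := by
  have h := (meas_eq_sum m Set.univ).symm
  simpa [ind] using h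

lemma pa_inter_compl [Preorder γ] (m : Measure γ) [IsProbabilityMeasure m]
    (hm : PositivelyAssociated m) {P Q : Set γ}
    (hP : IsUpperSet P) (hQ : IsUpperSet Q) :
    m (P ∩ Qᶜ) ≤ m P * m Qᶜ := by
  have h1 : m (P ∩ Q) + m (P ∩ Qᶜ) = m P := by
    rw [← Set.diff_eq]
    exact measure_inter_add_diff P (allMeasurable Q)
  have h2 : m P * m Q + m P * m Qᶜ = m P := by
    rw [← mul_add, measure_add_measure_compl (allMeasurable Q), measure_univ, mul_one]
  have h4 : m (P ∩ Q) + m (P ∩ Qᶜ) ≤ m (P ∩ Q) + m P * m Qᶜ := by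
    calc m (P ∩ Q) + m (P ∩ Qᶜ) = m P * m Q + m P * m Qᶜ := by rw [h1, h2]
    _ ≤ m (P ∩ Q) + m P * m Qᶜ := add_le_add_left (hm P Q hP hQ) _
  exact (ENNReal.add_le_add_iff_left (measure_ne_top m _)).mp h4

end FinMeas

section ProdA

variable {n : ℕ} {Ω : Fin n → Type*} [∀ i, Fintype (Ω i)]
  [∀ i, MeasurableSpace (Ω i)] [∀ i, MeasurableSingletonClass (Ω i)]
  (μi : ∀ i, Measure (Ω i)) [∀ i, IsProbabilityMeasure (μi i)]

noncomputable def pw (ω : ∀ i, Ω i) : ℝ≥0∞ := ∏ i, μi i {ω i}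

lemma pi_singleton (ω : ∀ i, Ω i) : Measure.pi μi {ω} = pw μi ω := by
  have h : ({ω} : Set (∀ i, Ω i)) = Set.pi Set.univ (fun i => {ω i}) := by
    ext x
    simp [funext_iff, Set.mem_pi]
  rw [h, Measure.pi_pi]
  rfl

lemma pw_update (ω : ∀ i, Ω i) (k : Fin n) (s : Ω k) :
    pw μi (update ω k s) * μi k {ω k} = pw μi ω * μi k {s} := by
  classical
  unfold pw
  rw [← Finset.prod_erase_mul Finset.univ _ (Finset.mem_univ k),
      ← Finset.prod_erase_mul Finset.univ (fun i => μi i {ω i}) (Finset.mem_univ k)]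
  have h : ∀ i ∈ Finset.univ.erase k, μi i {update ω k s i} = μi i {ω i} := by
    intro i hi
    rw [update_of_ne (Finset.mem_erase.mp hi).1]
  rw [Finset.prod_congr rfl h, update_self]
  ring

end ProdA

section ProdB
variable {n : ℕ} {Ω : Fin n → Type*} [∀ i, Fintype (Ω i)]
  [∀ i, MeasurableSpace (Ω i)] [∀ i, MeasurableSingletonClass (Ω i)]
  (μi : ∀ i, Measure (Ω i)) [∀ i, IsProbabilityMeasure (μi i)]

/-- Integrating out coordinate `k`. -/
lemma marg (k : Fin n) (f : (∀ i, Ω i) → ℝ≥0∞) :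
    ∑ ω : ∀ i, Ω i, pw μi ω * f ω =
      ∑ ω : ∀ i, Ω i, ∑ s : Ω k, pw μi ω * (μi k {s} * f (update ω k s)) := by
  classical
  have einv : ∀ p : (∀ i, Ω i) × Ω k,
      (fun p : (∀ i, Ω i) × Ω k => (update p.1 k p.2, p.1 k))
        ((fun p : (∀ i, Ω i) × Ω k => (update p.1 k p.2, p.1 k)) p) = p := by
    intro p
    simp [update_idem, update_eq_self]
  let e : ((∀ i, Ω i) × Ω k) ≃ ((∀ i, Ω i) × Ω k) :=
    ⟨fun p => (update p.1 k p.2, p.1 k), fun p => (update p.1 k p.2, p.1 k), einv, einv⟩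
  have h2 : ∀ p : (∀ i, Ω i) × Ω k,
      pw μi (update p.1 k p.2) * (μi k {p.1 k} *
        f (update (update p.1 k p.2) k (p.1 k))) =
      pw μi p.1 * (μi k {p.2} * f p.1) := by
    intro p
    rw [update_idem, update_eq_self, ← mul_assoc, pw_update μi p.1 k p.2, mul_assoc]
  have main : ∑ p : (∀ i, Ω i) × Ω k,
      pw μi p.1 * (μi k {p.2} * f (update p.1 k p.2)) = ∑ ω : ∀ i, Ω i, pw μi ω * f ω := by
    rw [← Equiv.sum_comp e (fun q : (∀ i, Ω i) × Ω k =>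
      pw μi q.1 * (μi k {q.2} * f (update q.1 k q.2)))]
    refine (Finset.sum_congr rfl (fun p _ => h2 p)).trans ?_
    rw [Fintype.sum_prod_type]
    refine Finset.sum_congr rfl (fun ω _ => ?_)
    have : ∑ s : Ω k, pw μi ω * (μi k {s} * f ω) =
        (pw μi ω * f ω) * ∑ s : Ω k, μi k {s} := by
      rw [Finset.mul_sum]
      refine Finset.sum_congr rfl (fun s _ => by ring)
    rw [this, sum_singleton_eq_one (μi k), mul_one]
  rw [← main, Fintype.sum_prod_type]


end ProdB

section Core
variable {n : ℕ} {Ω : Fin n → Type*} [∀ i, Fintype (Ω i)] [∀ i, PartialOrder (Ω i)]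
  [∀ i, MeasurableSpace (Ω i)] [∀ i, MeasurableSingletonClass (Ω i)]
  (μi : ∀ i, Measure (Ω i)) [∀ i, IsProbabilityMeasure (μi i)]

lemma ind_le_of_imp {α β : Type*} {X : Set α} {Y : Set β} {x : α} {y : β}
    (h : x ∈ X → y ∈ Y) : ind X x ≤ ind Y y := by
  classical
  by_cases hx : x ∈ X
  · rw [ind_of_mem hx, ind_of_mem (h hx)]
  · rw [ind_of_not_mem hx]; exact zero_le

lemma sum_weight_ind {γ : Type*} [Fintype γ] [MeasurableSpace γ]
    [MeasurableSingletonClass γ] (m : Measure γ) (X : Set γ) :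
    ∑ x : γ, m {x} * ind X x = m X := by
  rw [meas_eq_sum m X]
  exact Finset.sum_congr rfl fun x _ => mul_comm _ _

lemma sum_expand {γ : Type*} [Fintype γ] (w1 w2 a b c : γ → ℝ≥0∞) :
    ∑ s : γ, ∑ t : γ, w1 s * w2 t * (a s * b t + c t) =
      (∑ s : γ, w1 s * a s) * (∑ t : γ, w2 t * b t) +
        (∑ s : γ, w1 s) * (∑ t : γ, w2 t * c t) := by
  have h : ∀ s, ∑ t : γ, w1 s * w2 t * (a s * b t + c t)
      = (w1 s * a s) * (∑ t : γ, w2 t * b t) + w1 s * (∑ t : γ, w2 t * c t) := by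
    intro s
    rw [Finset.mul_sum, Finset.mul_sum, ← Finset.sum_add_distrib]
    exact Finset.sum_congr rfl fun t _ => by ring
  rw [Finset.sum_congr rfl fun s _ => h s, Finset.sum_add_distrib,
    ← Finset.sum_mul, ← Finset.sum_mul]

lemma core_step {A G H : Set (∀ i, Ω i)} (hA : IsUpperSet A) (hG : IsUpperSet G)
    (hH : IsUpperSet H) {K : Finset (Fin n)} {k : Fin n} (hk : k ∉ K)
    (hPAk : PositivelyAssociated (μi k)) (ω τ : ∀ i, Ω i) :
    ∑ s : Ω k, ∑ t : Ω k, μi k {s} * μi k {t} *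
        ind (EK A G H K) (update ω k s, update τ k t) ≤
      ∑ s : Ω k, ∑ t : Ω k, μi k {s} * μi k {t} *
        ind (EK A G H (insert k K)) (update ω k s, update τ k t) := by
  classical
  set U := Uset A G K k ω τ with hU
  set V := Vset A G K k ω τ with hV
  set W := Wset H K k ω τ with hW
  have hUp : IsUpperSet U := Uset_upper hA
  have hVp : IsUpperSet V := Vset_upper hG
  have hWp : IsUpperSet W := Wset_upper hH
  have hmid : ∀ X : Set (Ω k),
      ∑ s : Ω k, ∑ t : Ω k, μi k {s} * μi k {t} * ind X s = μi k X := by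
    intro X
    have h1 : ∀ s, ∑ t : Ω k, μi k {s} * μi k {t} * ind X s
        = μi k {s} * ind X s := by
      intro s
      calc ∑ t : Ω k, μi k {s} * μi k {t} * ind X s
          = (μi k {s} * ind X s) * ∑ t : Ω k, μi k {t} := by
            rw [Finset.mul_sum]
            exact Finset.sum_congr rfl fun t _ => by ring
        _ = μi k {s} * ind X s := by rw [sum_singleton_eq_one, mul_one]
    rw [Finset.sum_congr rfl fun s _ => h1 s, sum_weight_ind]
  have hsub : (U ∪ V) ∩ Wᶜ ⊆ (U ∩ (V ∪ W)ᶜ) ∪ (V ∩ Wᶜ) := by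
    rintro x ⟨hUV, hWx⟩
    by_cases hxV : x ∈ V
    · exact Or.inr ⟨hxV, hWx⟩
    · exact Or.inl ⟨hUV.resolve_right hxV, fun h => h.elim hxV hWx⟩
  have hpt : ∀ s t : Ω k,
      ind U s * ind (Vᶜ ∩ Wᶜ) t + ind (V ∩ Wᶜ) t ≤
        ind (EK A G H (insert k K)) (update ω k s, update τ k t) := by
    intro s t
    by_cases htV : t ∈ V
    · by_cases htW : t ∈ W
      · rw [ind_of_not_mem (X := Vᶜ ∩ Wᶜ) (fun h => h.1 htV),
          ind_of_not_mem (X := V ∩ Wᶜ) (fun h => h.2 htW)]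
        simp
      · rw [ind_of_not_mem (X := Vᶜ ∩ Wᶜ) (fun h => h.1 htV),
          ind_of_mem (X := V ∩ Wᶜ) ⟨htV, htW⟩, mul_zero, zero_add,
          ind_of_mem (F3 hk htV htW)]
    · by_cases htW : t ∈ W
      · rw [ind_of_not_mem (X := Vᶜ ∩ Wᶜ) (fun h => h.2 htW),
          ind_of_not_mem (X := V ∩ Wᶜ) (fun h => h.2 htW), mul_zero, zero_add]
        exact zero_le
      · rw [ind_of_mem (X := Vᶜ ∩ Wᶜ) ⟨htV, htW⟩,
          ind_of_not_mem (X := V ∩ Wᶜ) (fun h => htV h.1), mul_one, add_zero]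
        exact ind_le_of_imp (fun hs => F2 hk hs htW)
  calc ∑ s : Ω k, ∑ t : Ω k, μi k {s} * μi k {t} *
        ind (EK A G H K) (update ω k s, update τ k t)
      ≤ ∑ s : Ω k, ∑ t : Ω k, μi k {s} * μi k {t} * ind ((U ∪ V) ∩ Wᶜ) s :=
        Finset.sum_le_sum fun s _ => Finset.sum_le_sum fun t _ =>
          mul_le_mul_right (ind_le_of_imp (F1 hk)) _
    _ = μi k ((U ∪ V) ∩ Wᶜ) := hmid _
    _ ≤ μi k ((U ∩ (V ∪ W)ᶜ) ∪ (V ∩ Wᶜ)) := measure_mono hsub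
    _ ≤ μi k (U ∩ (V ∪ W)ᶜ) + μi k (V ∩ Wᶜ) := measure_union_le _ _
    _ ≤ μi k U * μi k ((V ∪ W)ᶜ) + μi k (V ∩ Wᶜ) :=
        add_le_add_left (pa_inter_compl (μi k) hPAk hUp (hVp.union hWp)) _
    _ = μi k U * μi k (Vᶜ ∩ Wᶜ) + μi k (V ∩ Wᶜ) := by rw [Set.compl_union]
    _ = ∑ s : Ω k, ∑ t : Ω k, μi k {s} * μi k {t} *
          (ind U s * ind (Vᶜ ∩ Wᶜ) t + ind (V ∩ Wᶜ) t) := by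
        rw [sum_expand, sum_weight_ind, sum_weight_ind, sum_weight_ind,
          sum_singleton_eq_one, one_mul]
    _ ≤ ∑ s : Ω k, ∑ t : Ω k, μi k {s} * μi k {t} *
          ind (EK A G H (insert k K)) (update ω k s, update τ k t) :=
        Finset.sum_le_sum fun s _ => Finset.sum_le_sum fun t _ =>
          mul_le_mul_right (hpt s t) _

end Core

section Assemble
variable {n : ℕ} {Ω : Fin n → Type*} [∀ i, Fintype (Ω i)] [∀ i, PartialOrder (Ω i)]
  [∀ i, MeasurableSpace (Ω i)] [∀ i, MeasurableSingletonClass (Ω i)]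
  (μi : ∀ i, Measure (Ω i)) [∀ i, IsProbabilityMeasure (μi i)]

lemma pi_meas_eq_sum (E : Set (∀ i, Ω i)) :
    Measure.pi μi E = ∑ ω : ∀ i, Ω i, pw μi ω * ind E ω := by
  rw [meas_eq_sum (Measure.pi μi) E]
  exact Finset.sum_congr rfl fun ω _ => by rw [pi_singleton, mul_comm]

lemma sum_pw : ∑ ω : ∀ i, Ω i, pw μi ω = 1 := by
  calc ∑ ω : ∀ i, Ω i, pw μi ω
      = ∑ ω : ∀ i, Ω i, pw μi ω * ind Set.univ ω :=
        Finset.sum_congr rfl fun ω _ =>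
          (by rw [ind_of_mem (Set.mem_univ ω), mul_one])
    _ = Measure.pi μi Set.univ := (pi_meas_eq_sum μi Set.univ).symm
    _ = 1 := measure_univ

noncomputable def S2 (A G H : Set (∀ i, Ω i)) (K : Finset (Fin n)) : ℝ≥0∞ :=
  ∑ ω : ∀ i, Ω i, pw μi ω * ∑ τ : ∀ i, Ω i, pw μi τ * ind (EK A G H K) (ω, τ)

lemma swap34 {α β : Type*} [Fintype α] [Fintype β] (c : β → ℝ≥0∞) (v : α → ℝ≥0∞)
    (X : β → β → α → ℝ≥0∞) :
    ∑ s : β, c s * ∑ τ : α, ∑ t : β, v τ * (c t * X s t τ)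
      = ∑ τ : α, v τ * ∑ s : β, ∑ t : β, c s * c t * X s t τ := by
  simp_rw [Finset.mul_sum]
  rw [Finset.sum_comm]
  refine Finset.sum_congr rfl fun τ _ => Finset.sum_congr rfl fun s _ =>
    Finset.sum_congr rfl fun t _ => by ring

lemma S2_norm (F : Set ((∀ i, Ω i) × (∀ i, Ω i))) (k : Fin n) :
    ∑ ω : ∀ i, Ω i, pw μi ω * ∑ τ : ∀ i, Ω i, pw μi τ * ind F (ω, τ)
      = ∑ ω : ∀ i, Ω i, pw μi ω * ∑ τ : ∀ i, Ω i, pw μi τ *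
          ∑ s : Ω k, ∑ t : Ω k, μi k {s} * μi k {t} *
            ind F (update ω k s, update τ k t) := by
  rw [marg μi k (fun ω => ∑ τ : ∀ i, Ω i, pw μi τ * ind F (ω, τ))]
  refine Finset.sum_congr rfl fun ω _ => ?_
  rw [← Finset.mul_sum]
  congr 1
  have h2 : ∀ s : Ω k, ∑ τ : ∀ i, Ω i, pw μi τ * ind F (update ω k s, τ)
      = ∑ τ : ∀ i, Ω i, ∑ t : Ω k, pw μi τ *
          (μi k {t} * ind F (update ω k s, update τ k t)) :=
    fun s => marg μi k _
  calc ∑ s : Ω k, μi k {s} * ∑ τ : ∀ i, Ω i, pw μi τ * ind F (update ω k s, τ)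
      = ∑ s : Ω k, μi k {s} * ∑ τ : ∀ i, Ω i, ∑ t : Ω k, pw μi τ *
          (μi k {t} * ind F (update ω k s, update τ k t)) := by
        exact Finset.sum_congr rfl fun s _ => by rw [h2 s]
    _ = ∑ τ : ∀ i, Ω i, pw μi τ * ∑ s : Ω k, ∑ t : Ω k, μi k {s} * μi k {t} *
          ind F (update ω k s, update τ k t) :=
        swap34 (fun s => μi k {s}) (pw μi) _

lemma S2_le_insert {A G H : Set (∀ i, Ω i)} (hA : IsUpperSet A) (hG : IsUpperSet G)
    (hH : IsUpperSet H) {K : Finset (Fin n)} {k : Fin n} (hk : k ∉ K)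
    (hPAk : PositivelyAssociated (μi k)) :
    S2 μi A G H K ≤ S2 μi A G H (insert k K) := by
  unfold S2
  rw [S2_norm μi (EK A G H K) k, S2_norm μi (EK A G H (insert k K)) k]
  refine Finset.sum_le_sum fun ω _ => mul_le_mul_right ?_ _
  refine Finset.sum_le_sum fun τ _ => mul_le_mul_right ?_ _
  exact core_step μi hA hG hH hk hPAk ω τ

lemma S2_empty (A G H : Set (∀ i, Ω i)) :
    S2 μi A G H ∅ = Measure.pi μi (Box2Not A G H) := by
  unfold S2
  have h : ∀ ω τ : ∀ i, Ω i, ind (EK A G H ∅) (ω, τ) = ind (Box2Not A G H) ω := by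
    intro ω τ
    have : (ω, τ) ∈ EK A G H ∅ ↔ ω ∈ Box2Not A G H := by
      simp [EK, Box2Not, Set.mem_setOf_eq, Finset.sdiff_empty]
    classical
    simp only [ind]
    rw [if_congr this rfl rfl]
  calc ∑ ω : ∀ i, Ω i, pw μi ω * ∑ τ : ∀ i, Ω i, pw μi τ * ind (EK A G H ∅) (ω, τ)
      = ∑ ω : ∀ i, Ω i, pw μi ω * ind (Box2Not A G H) ω := by
        refine Finset.sum_congr rfl fun ω _ => ?_
        congr 1
        calc ∑ τ : ∀ i, Ω i, pw μi τ * ind (EK A G H ∅) (ω, τ)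
            = ∑ τ : ∀ i, Ω i, pw μi τ * ind (Box2Not A G H) ω := by
              exact Finset.sum_congr rfl fun τ _ => by rw [h ω τ]
          _ = (∑ τ : ∀ i, Ω i, pw μi τ) * ind (Box2Not A G H) ω := by
              rw [Finset.sum_mul]
          _ = ind (Box2Not A G H) ω := by rw [sum_pw, one_mul]
    _ = Measure.pi μi (Box2Not A G H) := (pi_meas_eq_sum μi _).symm

lemma S2_univ (A G H : Set (∀ i, Ω i)) :
    S2 μi A G H Finset.univ ≤ Measure.pi μi A * Measure.pi μi (G ∩ Hᶜ) := by
  unfold S2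
  have h : ∀ ω τ : ∀ i, Ω i, ind (EK A G H Finset.univ) (ω, τ) ≤
      ind A ω * ind (G ∩ Hᶜ) τ := by
    intro ω τ
    classical
    by_cases hm : (ω, τ) ∈ EK A G H Finset.univ
    · have hm' := hm
      obtain ⟨⟨S, T, _, hcA, hcG⟩, hH'⟩ := hm'
      rw [mix_univ] at hcG hH'
      rw [ind_of_mem hm, ind_of_mem (X := A) hcA.mem,
        ind_of_mem (X := G ∩ Hᶜ) ⟨hcG.mem, hH'⟩, one_mul]
    · rw [ind_of_not_mem hm]
      exact zero_le
  calc ∑ ω : ∀ i, Ω i, pw μi ω * ∑ τ : ∀ i, Ω i, pw μi τ * ind (EK A G H Finset.univ) (ω, τ)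
      ≤ ∑ ω : ∀ i, Ω i, pw μi ω * ∑ τ : ∀ i, Ω i, pw μi τ * (ind A ω * ind (G ∩ Hᶜ) τ) :=
        Finset.sum_le_sum fun ω _ => mul_le_mul_right
          (Finset.sum_le_sum fun τ _ => mul_le_mul_right (h ω τ) _) _
    _ = (∑ ω : ∀ i, Ω i, pw μi ω * ind A ω) *
          (∑ τ : ∀ i, Ω i, pw μi τ * ind (G ∩ Hᶜ) τ) := by
        rw [Finset.sum_mul_sum]
        refine Finset.sum_congr rfl fun ω _ => ?_
        rw [Finset.mul_sum]
        exact Finset.sum_congr rfl fun τ _ => by ring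
    _ = Measure.pi μi A * Measure.pi μi (G ∩ Hᶜ) := by
        rw [← pi_meas_eq_sum, ← pi_meas_eq_sum]

/-- Conditional BK inequality for two increasing events. -/
lemma BK_cond {A G H : Set (∀ i, Ω i)} (hA : IsUpperSet A) (hG : IsUpperSet G)
    (hH : IsUpperSet H) (hPA : ∀ i, PositivelyAssociated (μi i)) :
    Measure.pi μi (Box2Not A G H) ≤ Measure.pi μi A * Measure.pi μi (G ∩ Hᶜ) := by
  have h1 : ∀ K : Finset (Fin n), S2 μi A G H ∅ ≤ S2 μi A G H K := by
    intro K
    induction K using Finset.induction_on with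
    | empty => exact le_rfl
    | @insert k K hk ih => exact ih.trans (S2_le_insert μi hA hG hH hk (hPA k))
  calc Measure.pi μi (Box2Not A G H) = S2 μi A G H ∅ := (S2_empty μi A G H).symm
    _ ≤ S2 μi A G H Finset.univ := h1 Finset.univ
    _ ≤ Measure.pi μi A * Measure.pi μi (G ∩ Hᶜ) := S2_univ μi A G H

end Assemble

section Count
variable {n k : ℕ} {Ω : Fin n → Type*}

/-- restricted count: maximum number of events indexed in `J` occurring disjointly. -/
noncomputable def XJ (A : Fin k → Set (∀ i, Ω i)) (J : Finset (Fin k)) (ω : ∀ i, Ω i) : ℕ :=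
  sSup {m : ℕ | ∃ I : Finset (Fin k), I ⊆ J ∧ I.card = m ∧ OccurDisjointly A I ω}

variable {A : Fin k → Set (∀ i, Ω i)}

lemma occurDisjointly_mono {I' I : Finset (Fin k)} (h : I' ⊆ I) {ω : ∀ i, Ω i}
    (hOD : OccurDisjointly A I ω) : OccurDisjointly A I' ω := by
  obtain ⟨S, hdisj, hcert⟩ := hOD
  exact ⟨S, fun j hj j' hj' hne => hdisj j (h hj) j' (h hj') hne,
    fun j hj => hcert j (h hj)⟩

lemma occurDisjointly_empty (ω : ∀ i, Ω i) : OccurDisjointly A (∅ : Finset (Fin k)) ω :=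
  ⟨fun _ => ∅, by simp, by simp⟩

lemma occurDisjointly_upper [∀ i, PartialOrder (Ω i)] (hA : ∀ j, IsUpperSet (A j))
    {I : Finset (Fin k)} {ω ω' : ∀ i, Ω i} (hω : ω ≤ ω')
    (hOD : OccurDisjointly A I ω) : OccurDisjointly A I ω' := by
  obtain ⟨S, hdisj, hcert⟩ := hOD
  exact ⟨S, hdisj, fun j hj =>
    (Cert.mono_point (hA j) hω (hcert j hj) : Cert (A j) (S j) ω')⟩

lemma XJ_zero_mem (J : Finset (Fin k)) (ω : ∀ i, Ω i) :
    0 ∈ {m : ℕ | ∃ I : Finset (Fin k), I ⊆ J ∧ I.card = m ∧ OccurDisjointly A I ω} :=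
  ⟨∅, Finset.empty_subset J, Finset.card_empty, occurDisjointly_empty ω⟩

lemma XJ_bddAbove (J : Finset (Fin k)) (ω : ∀ i, Ω i) :
    BddAbove {m : ℕ | ∃ I : Finset (Fin k), I ⊆ J ∧ I.card = m ∧ OccurDisjointly A I ω} := by
  refine ⟨k, fun m hm => ?_⟩
  obtain ⟨I, _, hcard, _⟩ := hm
  rw [← hcard]
  exact le_trans (Finset.card_le_univ I) (le_of_eq (Finset.card_fin k))

lemma le_XJ_iff {J : Finset (Fin k)} {ω : ∀ i, Ω i} {m : ℕ} :
    m ≤ XJ A J ω ↔ ∃ I : Finset (Fin k), I ⊆ J ∧ I.card = m ∧ OccurDisjointly A I ω := by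
  constructor
  · intro h
    have hmem := Nat.sSup_mem ⟨0, XJ_zero_mem (A := A) J ω⟩ (XJ_bddAbove (A := A) J ω)
    obtain ⟨I, hIJ, hcard, hOD⟩ := hmem
    obtain ⟨I', hI'I, hcard'⟩ := Finset.exists_subset_card_eq
      (show m ≤ I.card by rw [hcard]; exact h)
    exact ⟨I', hI'I.trans hIJ, hcard', occurDisjointly_mono hI'I hOD⟩
  · rintro ⟨I, hIJ, hcard, hOD⟩
    exact le_csSup (XJ_bddAbove J ω) ⟨I, hIJ, hcard, hOD⟩

lemma maxDisjOcc_eq_XJ_univ (ω : ∀ i, Ω i) :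
    maxDisjOcc A ω = XJ A Finset.univ ω := by
  unfold maxDisjOcc XJ
  congr 1
  ext m
  simp only [Set.mem_setOf_eq]
  exact ⟨fun ⟨I, h1, h2⟩ => ⟨I, Finset.subset_univ I, h1, h2⟩,
    fun ⟨I, _, h1, h2⟩ => ⟨I, h1, h2⟩⟩

lemma XJ_event_upper [∀ i, PartialOrder (Ω i)] (hA : ∀ j, IsUpperSet (A j))
    (J : Finset (Fin k)) (m : ℕ) : IsUpperSet {ω : ∀ i, Ω i | m ≤ XJ A J ω} := by
  intro ω ω' hω hm
  rw [Set.mem_setOf_eq, le_XJ_iff] at hm ⊢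
  obtain ⟨I, hIJ, hcard, hOD⟩ := hm
  exact ⟨I, hIJ, hcard, occurDisjointly_upper hA hω hOD⟩

lemma XJ_event_anti {J : Finset (Fin k)} {m m' : ℕ} (h : m ≤ m') :
    {ω : ∀ i, Ω i | m' ≤ XJ A J ω} ⊆ {ω : ∀ i, Ω i | m ≤ XJ A J ω} :=
  fun ω hω => le_trans h hω

lemma XJ_empty (ω : ∀ i, Ω i) : XJ A (∅ : Finset (Fin k)) ω = 0 := by
  refine Nat.eq_zero_of_le_zero (csSup_le ⟨0, XJ_zero_mem ∅ ω⟩ ?_)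
  rintro m ⟨I, hIJ, hcard, -⟩
  rw [Finset.subset_empty.mp hIJ] at hcard
  simp [← hcard]

/-- the key inclusion: if `m+1` events indexed in `insert k' J` occur disjointly but not
`m+1` events indexed in `J`, then `A k'` occurs disjointly from `{X_J ≥ m}`. -/
lemma key_inclusion {J : Finset (Fin k)} {k' : Fin k} (m : ℕ) :
    {ω : ∀ i, Ω i | m + 1 ≤ XJ A (insert k' J) ω} ⊆
      {ω | m + 1 ≤ XJ A J ω} ∪
        Box2Not (A k') {ω | m ≤ XJ A J ω} {ω | m + 1 ≤ XJ A J ω} := by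
  classical
  intro ω hω
  by_cases h1 : ω ∈ {ω : ∀ i, Ω i | m + 1 ≤ XJ A J ω}
  · exact Or.inl h1
  refine Or.inr ⟨?_, h1⟩
  rw [Set.mem_setOf_eq, le_XJ_iff] at hω
  obtain ⟨I, hIJ, hcard, S, hdisj, hcert⟩ := hω
  have hk'I : k' ∈ I := by
    by_contra hk'I
    refine h1 (le_XJ_iff.mpr ⟨I, ?_, hcard, S, hdisj, hcert⟩)
    intro x hx
    rcases Finset.mem_insert.mp (hIJ hx) with rfl | hxJ
    · exact absurd hx hk'I
    · exact hxJ
  refine ⟨S k', (I.erase k').biUnion S, ?_, hcert k' hk'I, ?_⟩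
  · rw [Finset.disjoint_biUnion_right]
    intro j hj
    exact hdisj k' hk'I j (Finset.mem_of_mem_erase hj)
      (Ne.symm (Finset.mem_erase.mp hj).1)
  · intro ω' hagree
    rw [Set.mem_setOf_eq, le_XJ_iff]
    refine ⟨I.erase k', ?_, ?_, S, ?_, ?_⟩
    · intro x hx
      rcases Finset.mem_erase.mp hx with ⟨hxk', hxI⟩
      rcases Finset.mem_insert.mp (hIJ hxI) with rfl | hxJ
      · exact absurd rfl hxk'
      · exact hxJ
    · rw [Finset.card_erase_of_mem hk'I, hcard]
      rfl
    · intro j hj j' hj' hne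
      exact hdisj j (Finset.mem_of_mem_erase hj) j' (Finset.mem_of_mem_erase hj') hne
    · intro j hj
      refine Cert.of_agree (hcert j (Finset.mem_of_mem_erase hj)) ?_
      intro i hi
      exact hagree i (Finset.mem_biUnion.mpr ⟨j, hj, hi⟩)

end Count

section Main
variable {n k : ℕ} {Ω : Fin n → Type*}
  [∀ i, Fintype (Ω i)] [∀ i, PartialOrder (Ω i)]
  [∀ i, MeasurableSpace (Ω i)] [∀ i, MeasurableSingletonClass (Ω i)]
  (μi : ∀ i, Measure (Ω i)) [∀ i, IsProbabilityMeasure (μi i)]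
  {Θ : Type*} [MeasurableSpace Θ] (ν : Measure Θ) [IsProbabilityMeasure ν]

lemma natMeasurable (s : Set ℕ) : MeasurableSet s := (Set.to_countable s).measurableSet

theorem main_nat (hPA : ∀ i, PositivelyAssociated (μi i))
    (A : Fin k → Set (∀ i, Ω i)) (hA : ∀ j, IsUpperSet (A j))
    (Y : Fin k → Θ → ℕ) (hYmeas : ∀ i, Measurable (Y i))
    (hYindep : iIndepFun Y ν)
    (hYbernoulli : ∀ i θ, Y i θ ≤ 1)
    (hYmean : ∀ i, ν {θ | Y i θ = 1} = Measure.pi μi (A i)) :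
    ∀ (J : Finset (Fin k)) (m : ℕ),
      Measure.pi μi {ω | m ≤ XJ A J ω} ≤ ν {θ | m ≤ ∑ i ∈ J, Y i θ} := by
  classical
  intro J
  induction J using Finset.induction_on with
  | empty =>
    intro m
    match m with
    | 0 =>
      have h1 : {ω : ∀ i, Ω i | 0 ≤ XJ A ∅ ω} = Set.univ := by ext ω; simp
      have h2 : {θ : Θ | 0 ≤ ∑ i ∈ (∅ : Finset (Fin k)), Y i θ} = Set.univ := by ext θ; simp
      rw [h1, h2, measure_univ, measure_univ]
    | m + 1 =>
      have h1 : {ω : ∀ i, Ω i | m + 1 ≤ XJ A ∅ ω} = ∅ := by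
        ext ω; simp [XJ_empty]
      rw [h1, measure_empty]
      exact zero_le
  | @insert k' J hk' ih =>
    intro m
    match m with
    | 0 =>
      have h1 : {ω : ∀ i, Ω i | 0 ≤ XJ A (insert k' J) ω} = Set.univ := by ext ω; simp
      have h2 : {θ : Θ | 0 ≤ ∑ i ∈ insert k' J, Y i θ} = Set.univ := by ext θ; simp
      rw [h1, h2, measure_univ, measure_univ]
    | m + 1 =>
      set μ := Measure.pi μi with hμdef
      set G := {ω : ∀ i, Ω i | m ≤ XJ A J ω} with hGdef
      set H := {ω : ∀ i, Ω i | m + 1 ≤ XJ A J ω} with hHdef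
      have hHG : H ⊆ G := XJ_event_anti (Nat.le_succ m)
      -- step 1 : the μ-side inequality
      have step1 : μ {ω | m + 1 ≤ XJ A (insert k' J) ω} ≤
          μ H + μ (A k') * μ (G ∩ Hᶜ) := by
        calc μ {ω | m + 1 ≤ XJ A (insert k' J) ω}
            ≤ μ (H ∪ Box2Not (A k') G H) := measure_mono (key_inclusion m)
          _ ≤ μ H + μ (Box2Not (A k') G H) := measure_union_le _ _
          _ ≤ μ H + μ (A k') * μ (G ∩ Hᶜ) :=
              add_le_add_right
                (BK_cond μi (hA k') (XJ_event_upper hA J m)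
                  (XJ_event_upper hA J (m + 1)) hPA) _
      -- step 2 : the ν-side identity
      have hset : {θ : Θ | m + 1 ≤ ∑ i ∈ insert k' J, Y i θ} =
          ({θ | Y k' θ = 1} ∩ {θ | m ≤ ∑ i ∈ J, Y i θ}) ∪
            ({θ | Y k' θ = 0} ∩ {θ | m + 1 ≤ ∑ i ∈ J, Y i θ}) := by
        ext θ
        have hb := hYbernoulli k' θ
        simp only [Set.mem_setOf_eq, Set.mem_union, Set.mem_inter_iff,
          Finset.sum_insert hk']
        omega
      have hSmeas : Measurable (fun θ => ∑ i ∈ J, Y i θ) := by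
        apply Finset.measurable_sum
        exact fun i _ => hYmeas i
      have hind : IndepFun (∑ j ∈ J, Y j) (Y k') ν :=
        hYindep.indepFun_finset_sum_of_notMem hYmeas hk'
      have hpre : ∀ (c : ℕ) (T : Set ℕ),
          ν ({θ | Y k' θ = c} ∩ {θ | (∑ i ∈ J, Y i) θ ∈ T}) =
            ν {θ | Y k' θ = c} * ν {θ | (∑ i ∈ J, Y i) θ ∈ T} := by
        intro c T
        have := hind.measure_inter_preimage_eq_mul T {c}
          (natMeasurable T) (natMeasurable {c})
        calc ν ({θ | Y k' θ = c} ∩ {θ | (∑ i ∈ J, Y i) θ ∈ T})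
            = ν ((∑ j ∈ J, Y j) ⁻¹' T ∩ (Y k') ⁻¹' {c}) := by
              rw [Set.inter_comm]; rfl
          _ = ν ((∑ j ∈ J, Y j) ⁻¹' T) * ν ((Y k') ⁻¹' {c}) := this
          _ = ν {θ | Y k' θ = c} * ν {θ | (∑ i ∈ J, Y i) θ ∈ T} := by
              rw [mul_comm]; rfl
      have hsum_apply : ∀ (T : Set ℕ), {θ | (∑ i ∈ J, Y i) θ ∈ T} =
          {θ | (∑ i ∈ J, Y i θ) ∈ T} := by
        intro T; ext θ; simp [Finset.sum_apply]
      have step2 : ν {θ | m + 1 ≤ ∑ i ∈ insert k' J, Y i θ} =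
          ν {θ | Y k' θ = 1} * ν {θ | m ≤ ∑ i ∈ J, Y i θ} +
            ν {θ | Y k' θ = 0} * ν {θ | m + 1 ≤ ∑ i ∈ J, Y i θ} := by
        rw [hset, measure_union, ]
        · have e1 := hpre 1 (Set.Ici m)
          have e2 := hpre 0 (Set.Ici (m + 1))
          rw [hsum_apply] at e1 e2
          have r1 : {θ : Θ | (∑ i ∈ J, Y i θ) ∈ Set.Ici m} = {θ | m ≤ ∑ i ∈ J, Y i θ} := rfl
          have r2 : {θ : Θ | (∑ i ∈ J, Y i θ) ∈ Set.Ici (m + 1)} =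
            {θ | m + 1 ≤ ∑ i ∈ J, Y i θ} := rfl
          rw [r1] at e1
          rw [r2] at e2
          rw [e1, e2]
        · refine Set.disjoint_left.mpr ?_
          rintro θ ⟨h1, -⟩ ⟨h0, -⟩
          simp only [Set.mem_setOf_eq] at h1 h0
          omega
        · exact ((hYmeas k') (natMeasurable {0})).inter (hSmeas (natMeasurable (Set.Ici (m+1))))
      -- complementary Bernoulli probabilities
      have hcompl : {θ : Θ | Y k' θ = 0} = {θ : Θ | Y k' θ = 1}ᶜ := by
        ext θ
        have := hYbernoulli k' θ
        simp only [Set.mem_setOf_eq, Set.mem_compl_iff]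
        omega
      have hpq : ν {θ | Y k' θ = 1} + ν {θ | Y k' θ = 0} = 1 := by
        rw [hcompl]
        have h := measure_add_measure_compl (μ := ν) (s := {θ | Y k' θ = 1})
          ((hYmeas k') (natMeasurable {1}))
        rwa [measure_univ] at h
      -- pass to real numbers
      set p := ν {θ | Y k' θ = 1} with hpdef
      set q := ν {θ | Y k' θ = 0} with hqdef
      set b0 := ν {θ | m ≤ ∑ i ∈ J, Y i θ} with hb0def
      set b1 := ν {θ | m + 1 ≤ ∑ i ∈ J, Y i θ} with hb1def
      have hpA : p = μ (A k') := hYmean k'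
      have hGH : (μ (G ∩ Hᶜ)).toReal = (μ G).toReal - (μ H).toReal := by
        rw [← Set.diff_eq, measure_diff hHG (allMeasurable H).nullMeasurableSet
          (measure_ne_top μ H),
          ENNReal.toReal_sub_of_le (measure_mono hHG) (measure_ne_top μ G)]
      have ihG : (μ G).toReal ≤ b0.toReal :=
        ENNReal.toReal_mono (measure_ne_top ν _) (ih m)
      have ihH : (μ H).toReal ≤ b1.toReal :=
        ENNReal.toReal_mono (measure_ne_top ν _) (ih (m + 1))
      have hp1 : p.toReal ≤ 1 := by
        rw [hpdef]
        exact ENNReal.toReal_le_of_le_ofReal one_pos.le (by simpa using prob_le_one)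
      have hq1 : p.toReal + q.toReal = 1 := by
        rw [← ENNReal.toReal_add (measure_ne_top ν _) (measure_ne_top ν _), hpq]
        exact ENNReal.toReal_one
      have hf1 : (μ {ω | m + 1 ≤ XJ A (insert k' J) ω}).toReal ≤
          (μ H).toReal + p.toReal * ((μ G).toReal - (μ H).toReal) := by
        have hne : μ H + μ (A k') * μ (G ∩ Hᶜ) ≠ ⊤ :=
          ENNReal.add_ne_top.mpr ⟨measure_ne_top μ H,
            ENNReal.mul_ne_top (measure_ne_top μ _) (measure_ne_top μ _)⟩
        have := ENNReal.toReal_mono hne step1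
        rwa [ENNReal.toReal_add (measure_ne_top μ H)
          (ENNReal.mul_ne_top (measure_ne_top μ _) (measure_ne_top μ _)),
          ENNReal.toReal_mul, hGH, ← hpA] at this
      have hf2 : (ν {θ | m + 1 ≤ ∑ i ∈ insert k' J, Y i θ}).toReal =
          p.toReal * b0.toReal + q.toReal * b1.toReal := by
        rw [step2, ENNReal.toReal_add (ENNReal.mul_ne_top (measure_ne_top ν _)
          (measure_ne_top ν _)) (ENNReal.mul_ne_top (measure_ne_top ν _)
          (measure_ne_top ν _)), ENNReal.toReal_mul, ENNReal.toReal_mul]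
      rw [← ENNReal.toReal_le_toReal (measure_ne_top μ _) (measure_ne_top ν _)]
      rw [hf2]
      have hHGr : (μ H).toReal ≤ (μ G).toReal :=
        ENNReal.toReal_mono (measure_ne_top μ _) (measure_mono hHG)
      have hp0 : 0 ≤ p.toReal := ENNReal.toReal_nonneg
      have hq0 : 0 ≤ q.toReal := ENNReal.toReal_nonneg
      have hq' : q.toReal = 1 - p.toReal := by linarith
      rw [hq']
      nlinarith [hf1, mul_nonneg (by linarith : (0:ℝ) ≤ 1 - p.toReal)
        (sub_nonneg.mpr ihH), mul_nonneg hp0 (sub_nonneg.mpr ihG)]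

end Main

/-- **Extended BK inequality (increasing events), stochastic domination form.**
In a finite product probability space with positively associated factors, if
`A 1, …, A k` are increasing events and `X` is the maximal number of them occurring
disjointly, then `X` is stochastically dominated by a sum `Y` of independent
Bernoulli random variables `Y i` with means `μ (A i)`. -/
theorem extended_BK_increasing
    {n k : ℕ} {Ω : Fin n → Type*}
    [∀ i, Fintype (Ω i)] [∀ i, PartialOrder (Ω i)]
    [∀ i, MeasurableSpace (Ω i)] [∀ i, MeasurableSingletonClass (Ω i)]
    (μi : ∀ i, Measure (Ω i)) [∀ i, IsProbabilityMeasure (μi i)]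
    (hPA : ∀ i, PositivelyAssociated (μi i))
    (A : Fin k → Set (∀ i, Ω i))
    (hA : ∀ j, IsUpperSet (A j))
    -- an abstract probability space carrying the independent Bernoulli variables
    {Θ : Type*} [MeasurableSpace Θ] (ν : Measure Θ) [IsProbabilityMeasure ν]
    (Y : Fin k → Θ → ℕ)
    (hYmeas : ∀ i, Measurable (Y i))
    (hYindep : iIndepFun Y ν)
    (hYbernoulli : ∀ i θ, Y i θ ≤ 1)
    (hYmean : ∀ i, ν {θ | Y i θ = 1} = Measure.pi μi (A i)) :
    ∀ r : ℝ,
      Measure.pi μi {ω | r ≤ (maxDisjOcc A ω : ℝ)} ≤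
        ν {θ | r ≤ ((∑ i, Y i θ : ℕ) : ℝ)} := by
  classical
  intro r
  rcases le_or_gt r 0 with hr | hr
  · have h1 : {ω : ∀ i, Ω i | r ≤ (maxDisjOcc A ω : ℝ)} = Set.univ := by
      ext ω
      simpa using hr.trans (Nat.cast_nonneg _)
    have h2 : {θ : Θ | r ≤ ((∑ i, Y i θ : ℕ) : ℝ)} = Set.univ := by
      ext θ
      simp only [Set.mem_setOf_eq, Set.mem_univ, iff_true]
      exact hr.trans (Nat.cast_nonneg _)
    rw [h1, h2, measure_univ, measure_univ]
  · have h1 : {ω : ∀ i, Ω i | r ≤ (maxDisjOcc A ω : ℝ)} =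
        {ω : ∀ i, Ω i | ⌈r⌉₊ ≤ XJ A Finset.univ ω} := by
      ext ω
      rw [Set.mem_setOf_eq, Set.mem_setOf_eq, ← maxDisjOcc_eq_XJ_univ, Nat.ceil_le]
    have h2 : {θ : Θ | r ≤ ((∑ i, Y i θ : ℕ) : ℝ)} =
        {θ : Θ | ⌈r⌉₊ ≤ ∑ i ∈ Finset.univ, Y i θ} := by
      ext θ
      rw [Set.mem_setOf_eq, Set.mem_setOf_eq, Nat.ceil_le]
    rw [h1, h2]
    exact main_nat μi ν hPA A hA Y hYmeas hYindep hYbernoulli hYmean Finset.univ ⌈r⌉₊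
end

section
/- Let (Ω,μ) = ∏_{i=1}^n (Ω_i,μ_i) be a finite product probability space in which each factor Ω_i is partially ordered and each μ_i is positively associated. Let A_1,…,A_k ⊆ Ω be events that are all decreasing, and define X(ω) = max{|I| : I ⊆ [k] and A_i, i ∈ I, occur disjointly at ω}. Let Y_1,…,Y_k be independent Bernoulli random variables with E Y_i = μ(A_i) and Y = Y_1 + ⋯ + Y_k. Then X is stochastically dominated by Y; that is, for every r ∈ ℝ, μ({ω : X(ω) ≥ r}) ≤ Pr(Y ≥ r). -/
open MeasureTheory ProbabilityTheory

set_option linter.unusedSectionVars false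
set_option linter.unnecessarySeqFocus false

open Finset

namespace BKProof


variable {ι : Type*} {κ : ι → Type*}

/-- `A` holds on the cylinder of `ω` given by coordinates in `S`. -/
def Cyl (A : Set (∀ i, κ i)) (S : Finset ι) (ω : ∀ i, κ i) : Prop :=
  ∀ ω' : ∀ i, κ i, (∀ i ∈ S, ω' i = ω i) → ω' ∈ A

/-- Disjoint occurrence of two events. -/
def Box (A B : Set (∀ i, κ i)) : Set (∀ i, κ i) :=
  {ω | ∃ S T : Finset ι, Disjoint S T ∧ Cyl A S ω ∧ Cyl B T ω}

/-- `A` is determined by the coordinates in `J`. -/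
def DetBy (A : Set (∀ i, κ i)) (J : Finset ι) : Prop :=
  ∀ ω ω' : ∀ i, κ i, (∀ i ∈ J, ω i = ω' i) → ω ∈ A → ω' ∈ A

lemma Cyl.mem {A : Set (∀ i, κ i)} {S : Finset ι} {ω : ∀ i, κ i} (h : Cyl A S ω) : ω ∈ A :=
  h ω (fun _ _ => rfl)

lemma Cyl.congr {A : Set (∀ i, κ i)} {S : Finset ι} {ω ω' : ∀ i, κ i}
    (hagree : ∀ i ∈ S, ω' i = ω i) (h : Cyl A S ω) : Cyl A S ω' := by
  intro ω'' h''
  exact h ω'' (fun i hi => (h'' i hi).trans (hagree i hi))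

lemma Cyl.mono_set {A : Set (∀ i, κ i)} {S S' : Finset ι} {ω : ∀ i, κ i}
    (hSS : S ⊆ S') (h : Cyl A S ω) : Cyl A S' ω :=
  fun ω' h' => h ω' (fun i hi => h' i (hSS hi))

section Order
variable [∀ i, Preorder (κ i)]

/-- For a lower set, cylinder conditions are antitone in the base point. -/
lemma Cyl.anti {A : Set (∀ i, κ i)} (hA : IsLowerSet A) {S : Finset ι} {ω ω' : ∀ i, κ i}
    (hle : ω' ≤ ω) (h : Cyl A S ω) : Cyl A S ω' := by
  classical
  intro ω'' h''
  have hmem : (fun i => if i ∈ S then ω i else ω'' i) ∈ A := by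
    refine h _ (fun i hi => by simp [hi])
  refine hA (fun i => ?_) hmem
  by_cases hi : i ∈ S
  · simpa [hi, h'' i hi] using hle i
  · simp [hi]

lemma Box.isLowerSet {A B : Set (∀ i, κ i)} (hA : IsLowerSet A) (hB : IsLowerSet B) :
    IsLowerSet (Box A B) := by
  rintro ω ω' hle ⟨S, T, hST, hS, hT⟩
  exact ⟨S, T, hST, Cyl.anti hA hle hS, Cyl.anti hB hle hT⟩

end Order

lemma DetBy.cyl_inter [DecidableEq ι] {A : Set (∀ i, κ i)} {J S : Finset ι} {ω : ∀ i, κ i}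
    (hdet : DetBy A J) (h : Cyl A S ω) : Cyl A (S ∩ J) ω := by
  classical
  intro ω' h'
  have hmem : (fun i => if i ∈ S then ω i else ω' i) ∈ A :=
    h _ (fun i hi => by simp [hi])
  refine hdet _ _ (fun i hi => ?_) hmem
  by_cases hiS : i ∈ S
  · simp only [hiS, if_pos]
    exact (h' i (Finset.mem_inter.2 ⟨hiS, hi⟩)).symm
  · simp [hiS]

variable {ι : Type*} [Fintype ι] [DecidableEq ι] {κ : ι → Type*} [∀ i, Fintype (κ i)]

open scoped Classical in
/-- Weighted probability of a set in a finite product space. -/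
noncomputable def Pw (w : ∀ i, κ i → ℝ) (A : Set (∀ i, κ i)) : ℝ :=
  ∑ ω : ∀ i, κ i, if ω ∈ A then ∏ i, w i (ω i) else 0

open scoped Classical in
/-- One-dimensional weighted probability. -/
noncomputable def Pw1 {γ : Type*} [Fintype γ] (v : γ → ℝ) (P : Set γ) : ℝ :=
  ∑ x : γ, if x ∈ P then v x else 0

variable {w : ∀ i, κ i → ℝ}

lemma Pw_nonneg (hw0 : ∀ i x, 0 ≤ w i x) (A : Set (∀ i, κ i)) : 0 ≤ Pw w A := by
  classical
  refine Finset.sum_nonneg (fun ω _ => ?_)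
  split
  · exact Finset.prod_nonneg (fun i _ => hw0 i _)
  · exact le_refl 0
  
lemma Pw_mono (hw0 : ∀ i x, 0 ≤ w i x) {A B : Set (∀ i, κ i)} (h : A ⊆ B) :
    Pw w A ≤ Pw w B := by
  classical
  refine Finset.sum_le_sum (fun ω _ => ?_)
  by_cases hω : ω ∈ A
  · simp [hω, h hω]
  · simp only [hω, if_false]
    split
    · exact Finset.prod_nonneg (fun i _ => hw0 i _)
    · exact le_refl 0

lemma Pw_union_of_disjoint {A B : Set (∀ i, κ i)} (h : Disjoint A B) :
    Pw w (A ∪ B) = Pw w A + Pw w B := by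
  classical
  rw [Pw, Pw, Pw, ← Finset.sum_add_distrib]
  refine Finset.sum_congr rfl (fun ω _ => ?_)
  by_cases hA : ω ∈ A
  · have hB : ω ∉ B := fun hB => (Set.disjoint_left.1 h hA hB)
    simp [hA, hB]
  · by_cases hB : ω ∈ B <;> simp [hA, hB]

lemma Pw_univ (hw1 : ∀ i, ∑ x, w i x = 1) : Pw w (Set.univ : Set (∀ i, κ i)) = 1 := by
  classical
  rw [Pw]
  simp only [Set.mem_univ, if_true]
  rw [← Fintype.piFinset_univ, ← Finset.prod_univ_sum]
  simp [hw1]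

lemma Pw_empty : Pw w (∅ : Set (∀ i, κ i)) = 0 := by
  classical
  rw [Pw]
  simp

lemma Pw_le_one (hw0 : ∀ i x, 0 ≤ w i x) (hw1 : ∀ i, ∑ x, w i x = 1)
    (A : Set (∀ i, κ i)) : Pw w A ≤ 1 := by
  calc Pw w A ≤ Pw w Set.univ := Pw_mono hw0 (Set.subset_univ A)
  _ = 1 := Pw_univ hw1

lemma Pw_diff {A B : Set (∀ i, κ i)} (h : A ⊆ B) :
    Pw w (B \ A) = Pw w B - Pw w A := by
  have : Pw w (A ∪ B \ A) = Pw w A + Pw w (B \ A) :=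
    Pw_union_of_disjoint (Set.disjoint_sdiff_right)
  rw [Set.union_diff_cancel h] at this
  linarith

/-- Positive association for a weight function, in "mixed" (upper/lower) form. -/
def PAweight {γ : Type*} [Fintype γ] [Preorder γ] (v : γ → ℝ) : Prop :=
  ∀ P Q : Set γ, IsUpperSet P → IsUpperSet Q → Pw1 v P * Pw1 v Q ≤ Pw1 v (P ∩ Q)

lemma Pw1_nonneg {γ : Type*} [Fintype γ] {v : γ → ℝ} (hv0 : ∀ x, 0 ≤ v x) (P : Set γ) :
    0 ≤ Pw1 v P := by
  classical
  refine Finset.sum_nonneg (fun x _ => ?_)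
  split
  · exact hv0 x
  · exact le_refl 0

lemma Pw1_compl {γ : Type*} [Fintype γ] {v : γ → ℝ} (hv1 : ∑ x, v x = 1) (P : Set γ) :
    Pw1 v Pᶜ = 1 - Pw1 v P := by
  classical
  have : Pw1 v P + Pw1 v Pᶜ = 1 := by
    rw [Pw1, Pw1, ← Finset.sum_add_distrib, ← hv1]
    refine Finset.sum_congr rfl (fun x _ => ?_)
    by_cases hx : x ∈ P <;> simp [hx]
  linarith

lemma Pw1_inter_le {γ : Type*} [Fintype γ] {v : γ → ℝ} (hv0 : ∀ x, 0 ≤ v x) (P Q : Set γ) :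
    Pw1 v (P ∩ Q) ≤ Pw1 v P := by
  classical
  refine Finset.sum_le_sum (fun x _ => ?_)
  by_cases hx : x ∈ P ∩ Q
  · simp [hx, hx.1]
  · simp only [hx, if_false]
    split
    · exact hv0 x
    · exact le_refl 0

/-- Mixed form of PA: a lower set and an upper set are negatively correlated. -/
lemma PAweight.mixed {γ : Type*} [Fintype γ] [Preorder γ] {v : γ → ℝ}
    (hPA : PAweight v) (hv0 : ∀ x, 0 ≤ v x) (hv1 : ∑ x, v x = 1)
    {L V : Set γ} (hL : IsLowerSet L) (hV : IsUpperSet V) :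
    Pw1 v (V ∩ L) ≤ Pw1 v V * Pw1 v L := by
  have hLc : IsUpperSet Lᶜ := hL.compl
  have h1 := hPA V Lᶜ hV hLc
  have h2 : Pw1 v (V ∩ Lᶜ) + Pw1 v (V ∩ L) = Pw1 v V := by
    classical
    rw [Pw1, Pw1, Pw1, ← Finset.sum_add_distrib]
    refine Finset.sum_congr rfl (fun x _ => ?_)
    by_cases hx : x ∈ V
    · by_cases hx' : x ∈ L <;> simp [hx, hx']
    · simp [hx, fun h : x ∈ V ∩ Lᶜ => hx h.1, fun h : x ∈ V ∩ L => hx h.1]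
  have h3 : Pw1 v Lᶜ = 1 - Pw1 v L := Pw1_compl hv1 L
  nlinarith [Pw1_nonneg hv0 V, Pw1_nonneg hv0 L]

open scoped Classical in
/-- Indicator with real values. -/
noncomputable def ind {α : Type*} (A : Set α) (x : α) : ℝ := if x ∈ A then 1 else 0

lemma ind_nonneg {α : Type*} (A : Set α) (x : α) : 0 ≤ ind A x := by
  rw [ind]; split <;> norm_num

lemma ind_le_one {α : Type*} (A : Set α) (x : α) : ind A x ≤ 1 := by
  rw [ind]; split <;> norm_num

lemma ind_of_mem {α : Type*} {A : Set α} {x : α} (h : x ∈ A) : ind A x = 1 := by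
  rw [ind, if_pos h]

lemma ind_of_not_mem {α : Type*} {A : Set α} {x : α} (h : x ∉ A) : ind A x = 0 := by
  rw [ind, if_neg h]

section Resample

variable {ι : Type*} [Fintype ι] [DecidableEq ι] {κ : ι → Type*} [∀ i, Fintype (κ i)]
variable {w : ∀ i, κ i → ℝ}

lemma Pw_eq_sum_ind (A : Set (∀ i, κ i)) :
    Pw w A = ∑ ω : ∀ i, κ i, (∏ i, w i (ω i)) * ind A ω := by
  classical
  rw [Pw]
  refine Finset.sum_congr rfl (fun ω _ => ?_)
  rw [ind]
  split <;> simp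

lemma prod_update_mul (ω : ∀ i, κ i) (c : ι) (v : κ c) :
    (∏ i, w i (Function.update ω c v i)) * w c (ω c) = (∏ i, w i (ω i)) * w c v := by
  classical
  have h1 : (∏ i, w i (Function.update ω c v i))
      = w c v * ∏ i ∈ Finset.univ.erase c, w i (ω i) := by
    rw [← Finset.mul_prod_erase Finset.univ (fun i => w i (Function.update ω c v i))
      (Finset.mem_univ c)]
    congr 1
    · simp
    · refine Finset.prod_congr rfl (fun i hi => ?_)
      rw [Function.update_of_ne (Finset.ne_of_mem_erase hi)]
  have h2 : (∏ i, w i (ω i)) = w c (ω c) * ∏ i ∈ Finset.univ.erase c, w i (ω i) :=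
    (Finset.mul_prod_erase Finset.univ (fun i => w i (ω i)) (Finset.mem_univ c)).symm
  rw [h1, h2]; ring

lemma Pw_resample (hw1 : ∀ i, ∑ x, w i x = 1) (c : ι) (f : (∀ i, κ i) → ℝ) :
    ∑ ω : ∀ i, κ i, (∏ i, w i (ω i)) * f ω
      = ∑ ω : ∀ i, κ i, (∏ i, w i (ω i)) * ∑ v, w c v * f (Function.update ω c v) := by
  classical
  have hinv : Function.Involutive
      (fun p : (∀ i, κ i) × κ c => (Function.update p.1 c p.2, p.1 c)) := by
    rintro ⟨ω, v⟩
    simp [Function.update_idem]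
  set e := hinv.toPerm with he
  have hrhs : ∑ ω : ∀ i, κ i, (∏ i, w i (ω i)) * ∑ v, w c v * f (Function.update ω c v)
      = ∑ p : (∀ i, κ i) × κ c, (∏ i, w i (p.1 i)) * (w c p.2 * f (Function.update p.1 c p.2)) := by
    rw [Fintype.sum_prod_type]
    exact Finset.sum_congr rfl (fun ω _ => by rw [Finset.mul_sum])
  rw [hrhs]
  set g : (∀ i, κ i) × κ c → ℝ :=
    fun p => (∏ i, w i (p.1 i)) * (w c p.2 * f (Function.update p.1 c p.2)) with hg
  have hsum : ∑ p, g (e p) = ∑ p, g p := Equiv.sum_comp e g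
  rw [← hsum]
  have hpt : ∀ p : (∀ i, κ i) × κ c,
      g (e p) = ((∏ i, w i (p.1 i)) * w c p.2) * f p.1 := by
    rintro ⟨ω, v⟩
    have he1 : e (ω, v) = (Function.update ω c v, ω c) := rfl
    rw [he1, hg]
    simp only
    rw [Function.update_idem, Function.update_eq_self]
    have hk := prod_update_mul (w := w) ω c v
    linear_combination (f ω) * hk
  rw [Finset.sum_congr rfl (fun p _ => hpt p), Fintype.sum_prod_type]
  refine Finset.sum_congr rfl (fun ω _ => ?_)
  simp_rw [show ∀ v : κ c, ((∏ i, w i (ω i)) * w c v) * f ω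
      = w c v * ((∏ i, w i (ω i)) * f ω) from fun v => by ring, ← Finset.sum_mul, hw1 c, one_mul]

lemma Pw_resample2 (hw1 : ∀ i, ∑ x, w i x = 1) {c₁ c₂ : ι} (hne : c₁ ≠ c₂)
    (f : (∀ i, κ i) → ℝ) :
    ∑ ω : ∀ i, κ i, (∏ i, w i (ω i)) * f ω
      = ∑ ω : ∀ i, κ i, (∏ i, w i (ω i)) *
          ∑ v₁, ∑ v₂, w c₁ v₁ * w c₂ v₂ *
            f (Function.update (Function.update ω c₁ v₁) c₂ v₂) := by
  classical
  rw [Pw_resample hw1 c₁ f]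
  rw [Pw_resample hw1 c₂ (fun ω => ∑ v, w c₁ v * f (Function.update ω c₁ v))]
  refine Finset.sum_congr rfl (fun ω _ => ?_)
  congr 1
  rw [Finset.sum_comm]
  refine Finset.sum_congr rfl (fun v₂ _ => ?_)
  rw [Finset.mul_sum]
  refine Finset.sum_congr rfl (fun v₁ _ => ?_)
  rw [Function.update_comm hne.symm]
  ring

end Resample

section Pw1More

variable {γ : Type*} [Fintype γ]

lemma Pw1_eq_sum_ind (v : γ → ℝ) (P : Set γ) :
    Pw1 v P = ∑ x : γ, v x * ind P x := by
  classical
  rw [Pw1]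
  refine Finset.sum_congr rfl (fun x _ => ?_)
  rw [ind]; split <;> simp

lemma Pw1_union_of_disjoint {v : γ → ℝ} {P Q : Set γ} (h : Disjoint P Q) :
    Pw1 v (P ∪ Q) = Pw1 v P + Pw1 v Q := by
  classical
  rw [Pw1, Pw1, Pw1, ← Finset.sum_add_distrib]
  refine Finset.sum_congr rfl (fun x _ => ?_)
  by_cases hP : x ∈ P
  · have hQ : x ∉ Q := fun hQ => Set.disjoint_left.1 h hP hQ
    simp [hP, hQ]
  · by_cases hQ : x ∈ Q <;> simp [hP, hQ]

end Pw1More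

/-- Reducible selector for the doubled index set. -/
abbrev selS {ι : Type*} : ι ⊕ ι → ι := fun x => Sum.casesOn x id id

section Key

variable {ι : Type*} [Fintype ι] [DecidableEq ι] {κ : ι → Type*} [∀ i, Fintype (κ i)]
  [∀ i, PartialOrder (κ i)]

/-- The weight function on the doubled index set. -/
def hw (w : ∀ i, κ i → ℝ) : ∀ s : ι ⊕ ι, κ (selS s) → ℝ :=
  fun s => w (selS s)

/-- Reading a configuration on the doubled space: coordinates in `t` are read
from the second copy, the others from the first copy. -/
def rho (t : Finset ι) (ωh : ∀ s : ι ⊕ ι, κ (selS s)) : ∀ i, κ i :=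
  fun i => if i ∈ t then ωh (Sum.inr i) else ωh (Sum.inl i)

variable {w : ∀ i, κ i → ℝ}

lemma hw_nonneg (hw0 : ∀ i x, 0 ≤ w i x) : ∀ s (x : κ (selS s)), 0 ≤ hw w s x := by
  rintro (i | i) x <;> exact hw0 i x

lemma hw_sum_one (hw1 : ∀ i, ∑ x, w i x = 1) : ∀ s, ∑ x, hw w s x = 1 := by
  rintro (i | i) <;> exact hw1 i

lemma rho_mono (t : Finset ι) : Monotone (rho (κ := κ) t) := by
  intro ωh ωh' h i
  rw [rho, rho]
  by_cases hi : i ∈ t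
  · simpa [hi] using h (Sum.inr i)
  · simpa [hi] using h (Sum.inl i)

lemma rho_empty (ωh : ∀ s : ι ⊕ ι, κ (selS s)) :
    rho ∅ ωh = fun i => ωh (Sum.inl i) :=
  funext fun i => if_neg (Finset.notMem_empty i)

lemma rho_univ (ωh : ∀ s : ι ⊕ ι, κ (selS s)) :
    rho Finset.univ ωh = fun i => ωh (Sum.inr i) :=
  funext fun i => if_pos (Finset.mem_univ i)

lemma rho_agree {t : Finset ι} {a : ι} (ha : a ∉ t)
    {ωh ωh' : ∀ s : ι ⊕ ι, κ (selS s)}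
    (h : ∀ s ∈ Finset.univ.erase (Sum.inr a), ωh s = ωh' s) : rho t ωh = rho t ωh' := by
  funext i
  rw [rho, rho]
  by_cases hi : i ∈ t
  · rw [if_pos hi, if_pos hi]
    refine h _ (Finset.mem_erase.2 ⟨?_, Finset.mem_univ _⟩)
    simp only [ne_eq, Sum.inr.injEq]
    rintro rfl; exact ha hi
  · rw [if_neg hi, if_neg hi]
    exact h _ (Finset.mem_erase.2 ⟨by simp, Finset.mem_univ _⟩)

lemma detby_rho {X : Set (∀ i, κ i)} {t : Finset ι} {a : ι} (ha : a ∉ t) :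
    DetBy (rho t ⁻¹' X) (Finset.univ.erase (Sum.inr a)) := by
  intro ωh ωh' h hX
  have : rho t ωh = rho t ωh' := rho_agree ha h
  simpa [Set.mem_preimage, ← this] using hX

lemma rho_insert_eq {t : Finset ι} {a : ι} (ha : a ∉ t)
    (ωh : ∀ s : ι ⊕ ι, κ (selS s)) :
    rho (insert a t) ωh
      = rho t (Function.update ωh (Sum.inl a) (ωh (Sum.inr a))) := by
  funext i
  rw [rho, rho]
  by_cases hit : i ∈ t
  · rw [if_pos (Finset.mem_insert_of_mem hit), if_pos hit,
      Function.update_of_ne (by simp)]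
  · by_cases hia : i = a
    · subst hia
      rw [if_pos (Finset.mem_insert_self i t), if_neg hit, Function.update_self]
    · rw [if_neg (by simp [hia, hit]), if_neg hit,
        Function.update_of_ne (by simp [hia])]

lemma Pw_hat_rect (Z C : Set (∀ i, κ i)) :
    Pw (hw w) ({ωh | (fun i => ωh (Sum.inr i)) ∈ Z} ∩ {ωh | (fun i => ωh (Sum.inl i)) ∈ C})
      = Pw w Z * Pw w C := by
  classical
  rw [Pw_eq_sum_ind, Pw_eq_sum_ind, Pw_eq_sum_ind]
  set e := (Equiv.sumPiEquivProdPi (fun s : ι ⊕ ι => κ (selS s))).symm with he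
  rw [← Equiv.sum_comp e
    (fun ωh => (∏ s, hw w s (ωh s)) *
      ind ({ωh | (fun i => ωh (Sum.inr i)) ∈ Z} ∩ {ωh | (fun i => ωh (Sum.inl i)) ∈ C}) ωh)]
  rw [Fintype.sum_prod_type]
  have hterm : ∀ (f g : ∀ i, κ i),
      (∏ s, hw w s (e (f, g) s)) *
        ind ({ωh | (fun i => ωh (Sum.inr i)) ∈ Z} ∩ {ωh | (fun i => ωh (Sum.inl i)) ∈ C})
          (e (f, g))
      = ((∏ i, w i (g i)) * ind Z g) * ((∏ i, w i (f i)) * ind C f) := by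
    intro f g
    have h1 : (fun i => (e (f, g)) (Sum.inl i)) = f := rfl
    have h2 : (fun i => (e (f, g)) (Sum.inr i)) = g := rfl
    have hprod : (∏ s, hw w s (e (f, g) s)) = (∏ i, w i (f i)) * (∏ i, w i (g i)) := by
      rw [Fintype.prod_sum_type]
      rfl
    have hind : ind ({ωh | (fun i => ωh (Sum.inr i)) ∈ Z} ∩
        {ωh | (fun i => ωh (Sum.inl i)) ∈ C}) (e (f, g)) = ind Z g * ind C f := by
      rw [ind, ind, ind]
      by_cases hZ : g ∈ Z
      · by_cases hC : f ∈ C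
        · rw [if_pos ⟨by rw [Set.mem_setOf_eq, h2]; exact hZ, by rw [Set.mem_setOf_eq, h1]; exact hC⟩,
            if_pos hZ, if_pos hC]; norm_num
        · rw [if_neg (fun hmem => hC (by rw [← h1]; exact hmem.2)), if_neg hC]; norm_num
      · rw [if_neg (fun hmem => hZ (by rw [← h2]; exact hmem.1)), if_neg hZ]; norm_num
    rw [hprod, hind]; ring
  calc (∑ f : ∀ i, κ i, ∑ g : ∀ i, κ i,
        (∏ s, hw w s (e (f, g) s)) *
          ind ({ωh | (fun i => ωh (Sum.inr i)) ∈ Z} ∩ {ωh | (fun i => ωh (Sum.inl i)) ∈ C})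
            (e (f, g)))
      = ∑ f : ∀ i, κ i, ((∏ i, w i (f i)) * ind C f) * ∑ g : ∀ i, κ i,
          ((∏ i, w i (g i)) * ind Z g) := by
        refine Finset.sum_congr rfl (fun f _ => ?_)
        rw [Finset.mul_sum]
        exact Finset.sum_congr rfl (fun g _ => by rw [hterm f g]; ring)
    _ = (∑ g : ∀ i, κ i, (∏ i, w i (g i)) * ind Z g) *
          (∑ f : ∀ i, κ i, (∏ i, w i (f i)) * ind C f) := by
        rw [← Finset.sum_mul]
        ring
/-- The scalar core of the one-coordinate replacement step. -/
lemma scalar_core {γ : Type*} [Fintype γ] [PartialOrder γ] {v : γ → ℝ}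
    (hv0 : ∀ x, 0 ≤ v x) (hv1 : ∑ x, v x = 1) (hPAv : PAweight v)
    (uu l₁ l₂ : Set γ) (huu : IsUpperSet uu) (hl₁ : IsLowerSet l₁) (hl₂ : IsLowerSet l₂)
    (f g : γ → γ → ℝ)
    (hf : ∀ x y, f x y ≤ ind (uu ∩ (l₁ ∪ l₂)) x)
    (hg : ∀ x y, ind (uu ∩ l₁) x + ind l₂ y * ind (uu ∩ l₁ᶜ) x ≤ g x y) :
    (∑ x, ∑ y, v x * v y * f x y) ≤ ∑ x, ∑ y, v x * v y * g x y := by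
  classical
  have hvv : ∀ x y : γ, 0 ≤ v x * v y := fun x y => mul_nonneg (hv0 x) (hv0 y)
  have h2 : ∀ (P : Set γ), (∑ x : γ, ∑ y : γ, v x * v y * ind P x) = Pw1 v P := by
    intro P
    rw [Pw1_eq_sum_ind]
    refine Finset.sum_congr rfl fun x _ => ?_
    calc ∑ y : γ, v x * v y * ind P x = (∑ y : γ, v y) * (v x * ind P x) := by
          rw [Finset.sum_mul]
          exact Finset.sum_congr rfl fun y _ => by ring
      _ = v x * ind P x := by rw [hv1, one_mul]
  have h1 : (∑ x : γ, ∑ y : γ, v x * v y * f x y) ≤ Pw1 v (uu ∩ (l₁ ∪ l₂)) := by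
    rw [← h2 (uu ∩ (l₁ ∪ l₂))]
    exact Finset.sum_le_sum fun x _ => Finset.sum_le_sum fun y _ =>
      mul_le_mul_of_nonneg_left (hf x y) (hvv x y)
  have h3 : Pw1 v (uu ∩ (l₁ ∪ l₂)) = Pw1 v (uu ∩ l₁) + Pw1 v ((uu ∩ l₁ᶜ) ∩ l₂) := by
    rw [← Pw1_union_of_disjoint ?hd]
    case hd =>
      refine Set.disjoint_left.2 ?_
      rintro x ⟨_, hx1⟩ ⟨⟨_, hx1c⟩, _⟩
      exact hx1c hx1
    congr 1
    ext x
    simp only [Set.mem_inter_iff, Set.mem_union, Set.mem_compl_iff]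
    tauto
  have h4 : Pw1 v ((uu ∩ l₁ᶜ) ∩ l₂) ≤ Pw1 v l₂ * Pw1 v (uu ∩ l₁ᶜ) := by
    have hm := hPAv.mixed hv0 hv1 hl₂ (huu.inter hl₁.compl)
    calc Pw1 v ((uu ∩ l₁ᶜ) ∩ l₂) ≤ Pw1 v (uu ∩ l₁ᶜ) * Pw1 v l₂ := hm
      _ = Pw1 v l₂ * Pw1 v (uu ∩ l₁ᶜ) := by ring
  have e1 : (∑ x : γ, ∑ y : γ, v x * v y * (ind l₂ y * ind (uu ∩ l₁ᶜ) x))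
      = Pw1 v l₂ * Pw1 v (uu ∩ l₁ᶜ) := by
    rw [Pw1_eq_sum_ind, Pw1_eq_sum_ind, Finset.sum_mul_sum, Finset.sum_comm]
    exact Finset.sum_congr rfl fun x _ => Finset.sum_congr rfl fun y _ => by ring
  have h5 : Pw1 v (uu ∩ l₁) + Pw1 v l₂ * Pw1 v (uu ∩ l₁ᶜ)
      ≤ ∑ x : γ, ∑ y : γ, v x * v y * g x y := by
    have hexp : Pw1 v (uu ∩ l₁) + Pw1 v l₂ * Pw1 v (uu ∩ l₁ᶜ)
        = ∑ x : γ, ∑ y : γ, v x * v y *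
            (ind (uu ∩ l₁) x + ind l₂ y * ind (uu ∩ l₁ᶜ) x) := by
      rw [← h2 (uu ∩ l₁), ← e1, ← Finset.sum_add_distrib]
      refine Finset.sum_congr rfl fun x _ => ?_
      rw [← Finset.sum_add_distrib]
      exact Finset.sum_congr rfl fun y _ => by ring
    rw [hexp]
    exact Finset.sum_le_sum fun x _ => Finset.sum_le_sum fun y _ =>
      mul_le_mul_of_nonneg_left (hg x y) (hvv x y)
  linarith

/-- The one-coordinate replacement step. -/
lemma step (hw0 : ∀ i x, 0 ≤ w i x) (hw1 : ∀ i, ∑ x, w i x = 1)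
    (hPA : ∀ i, PAweight (w i))
    {A B U : Set (∀ i, κ i)} (hA : IsLowerSet A) (hB : IsLowerSet B) (hU : IsUpperSet U)
    {t : Finset ι} {a : ι} (ha : a ∉ t) :
    Pw (hw w) (Box (rho t ⁻¹' A) (rho ∅ ⁻¹' B) ∩ rho ∅ ⁻¹' U)
      ≤ Pw (hw w) (Box (rho (insert a t) ⁻¹' A) (rho ∅ ⁻¹' B) ∩ rho ∅ ⁻¹' U) := by
  classical
  set Et := Box (rho t ⁻¹' A) (rho (∅ : Finset ι) ⁻¹' B) ∩ rho (∅ : Finset ι) ⁻¹' U with hEtdef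
  set Et' := Box (rho (insert a t) ⁻¹' A) (rho (∅ : Finset ι) ⁻¹' B) ∩ rho (∅ : Finset ι) ⁻¹' U
    with hEt'def
  have hne : (Sum.inl a : ι ⊕ ι) ≠ Sum.inr a := by simp
  rw [Pw_eq_sum_ind, Pw_eq_sum_ind,
    Pw_resample2 (hw_sum_one hw1) hne (ind Et),
    Pw_resample2 (hw_sum_one hw1) hne (ind Et')]
  refine Finset.sum_le_sum (fun ωh _ => ?_)
  refine mul_le_mul_of_nonneg_left ?_ (Finset.prod_nonneg fun s _ => hw_nonneg hw0 s _)
  -- abbreviations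
  have hup_ne : ∀ (x : κ a) (s : ι ⊕ ι), s ≠ Sum.inl a →
      Function.update ωh (Sum.inl a) x s = ωh s := fun x s hs => Function.update_of_ne hs _ _
  have hupd2_ne : ∀ (x y : κ a) (s : ι ⊕ ι), s ≠ Sum.inr a →
      Function.update (Function.update ωh (Sum.inl a) x) (Sum.inr a) y s
        = Function.update ωh (Sum.inl a) x s := fun x y s hs => Function.update_of_ne hs _ _
  have hrho0 : ∀ x y : κ a, rho (∅ : Finset ι)
        (Function.update (Function.update ωh (Sum.inl a) x) (Sum.inr a) y)
      = rho (∅ : Finset ι) (Function.update ωh (Sum.inl a) x) := fun x y =>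
    rho_agree (Finset.notMem_empty a)
      (fun s hs => hupd2_ne x y s (Finset.ne_of_mem_erase hs))
  -- the three key subsets of `κ a`
  set uu : Set (κ a) :=
    {x | Function.update ωh (Sum.inl a) x ∈ rho (∅ : Finset ι) ⁻¹' U} with huudef
  set l₁ : Set (κ a) := {x | ∃ S T : Finset (ι ⊕ ι), Disjoint S T ∧ Sum.inl a ∉ S ∧
    Sum.inr a ∉ S ∧ Sum.inr a ∉ T ∧
    Cyl (rho t ⁻¹' A) S (Function.update ωh (Sum.inl a) x) ∧
    Cyl (rho (∅ : Finset ι) ⁻¹' B) T (Function.update ωh (Sum.inl a) x)} with hl₁def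
  set l₂ : Set (κ a) := {x | ∃ S T : Finset (ι ⊕ ι), Disjoint S T ∧ Sum.inl a ∈ S ∧
    Sum.inr a ∉ S ∧ Sum.inl a ∉ T ∧ Sum.inr a ∉ T ∧
    Cyl (rho t ⁻¹' A) S (Function.update ωh (Sum.inl a) x) ∧
    Cyl (rho (∅ : Finset ι) ⁻¹' B) T (Function.update ωh (Sum.inl a) x)} with hl₂def
  -- Claim C0
  have hC0 : ∀ x y : κ a,
      Function.update (Function.update ωh (Sum.inl a) x) (Sum.inr a) y ∈ Et →
        x ∈ uu ∩ (l₁ ∪ l₂) := by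
    intro x y hmem
    obtain ⟨⟨S, T, hST, hSA, hTB⟩, hUmem⟩ := hmem
    have hxu : x ∈ uu := by
      simp only [huudef, Set.mem_setOf_eq, Set.mem_preimage]
      rw [← hrho0 x y]
      exact hUmem
    have hSA' : Cyl (rho t ⁻¹' A) (S ∩ Finset.univ.erase (Sum.inr a))
        (Function.update (Function.update ωh (Sum.inl a) x) (Sum.inr a) y) :=
      (detby_rho ha).cyl_inter hSA
    have hTB' : Cyl (rho (∅ : Finset ι) ⁻¹' B) (T ∩ Finset.univ.erase (Sum.inr a))
        (Function.update (Function.update ωh (Sum.inl a) x) (Sum.inr a) y) :=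
      (detby_rho (Finset.notMem_empty a)).cyl_inter hTB
    set S' := S ∩ Finset.univ.erase (Sum.inr a) with hS'def
    set T' := T ∩ Finset.univ.erase (Sum.inr a) with hT'def
    have hS'c₂ : Sum.inr a ∉ S' := by simp [hS'def]
    have hT'c₂ : Sum.inr a ∉ T' := by simp [hT'def]
    have hST' : Disjoint S' T' :=
      hST.mono Finset.inter_subset_left Finset.inter_subset_left
    have hSA'' : Cyl (rho t ⁻¹' A) S' (Function.update ωh (Sum.inl a) x) :=
      Cyl.congr (fun s hs => (hupd2_ne x y s (by rintro rfl; exact hS'c₂ hs)).symm) hSA'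
    have hTB'' : Cyl (rho (∅ : Finset ι) ⁻¹' B) T' (Function.update ωh (Sum.inl a) x) :=
      Cyl.congr (fun s hs => (hupd2_ne x y s (by rintro rfl; exact hT'c₂ hs)).symm) hTB'
    by_cases hc₁ : Sum.inl a ∈ S'
    · exact ⟨hxu, Or.inr ⟨S', T', hST', hc₁, hS'c₂,
        Finset.disjoint_left.1 hST' hc₁, hT'c₂, hSA'', hTB''⟩⟩
    · exact ⟨hxu, Or.inl ⟨S', T', hST', hc₁, hS'c₂, hT'c₂, hSA'', hTB''⟩⟩
  -- Claim C1
  have hC1 : ∀ x : κ a, x ∈ uu ∩ l₁ → ∀ y : κ a,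
      Function.update (Function.update ωh (Sum.inl a) x) (Sum.inr a) y ∈ Et' := by
    rintro x ⟨hxu, S, T, hST, hc₁S, hc₂S, hc₂T, hSA, hTB⟩ y
    refine ⟨⟨S, T, hST, ?_, ?_⟩, ?_⟩
    · intro ω' hagree
      show rho (insert a t) ω' ∈ A
      rw [rho_insert_eq ha]
      refine hSA (Function.update ω' (Sum.inl a) (ω' (Sum.inr a))) ?_
      intro s hs
      have hs₁ : s ≠ Sum.inl a := by rintro rfl; exact hc₁S hs
      have hs₂ : s ≠ Sum.inr a := by rintro rfl; exact hc₂S hs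
      calc Function.update ω' (Sum.inl a) (ω' (Sum.inr a)) s
          = ω' s := Function.update_of_ne hs₁ _ _
        _ = Function.update (Function.update ωh (Sum.inl a) x) (Sum.inr a) y s :=
            hagree s hs
        _ = Function.update ωh (Sum.inl a) x s := hupd2_ne x y s hs₂
    · exact Cyl.congr (fun s hs => hupd2_ne x y s (by rintro rfl; exact hc₂T hs)) hTB
    · show Function.update (Function.update ωh (Sum.inl a) x) (Sum.inr a) y
          ∈ rho (∅ : Finset ι) ⁻¹' U
      simp only [Set.mem_preimage]
      rw [hrho0 x y]
      exact hxu
  -- Claim C2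
  have hC2 : ∀ x x' : κ a, x ∈ l₂ → x' ∈ uu →
      Function.update (Function.update ωh (Sum.inl a) x') (Sum.inr a) x ∈ Et' := by
    rintro x x' ⟨S, T, hST, hc₁S, hc₂S, hc₁T, hc₂T, hSA, hTB⟩ hx'u
    refine ⟨⟨insert (Sum.inr a) (S.erase (Sum.inl a)), T, ?_, ?_, ?_⟩, ?_⟩
    · rw [Finset.disjoint_insert_left]
      exact ⟨hc₂T, hST.mono (Finset.erase_subset _ _) le_rfl⟩
    · intro ω' hagree
      show rho (insert a t) ω' ∈ A
      rw [rho_insert_eq ha]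
      refine hSA (Function.update ω' (Sum.inl a) (ω' (Sum.inr a))) ?_
      intro s hs
      by_cases hs₁ : s = Sum.inl a
      · subst hs₁
        calc Function.update ω' (Sum.inl a) (ω' (Sum.inr a)) (Sum.inl a)
            = ω' (Sum.inr a) := Function.update_self _ _ _
          _ = Function.update (Function.update ωh (Sum.inl a) x') (Sum.inr a) x
                (Sum.inr a) := hagree _ (Finset.mem_insert_self _ _)
          _ = x := Function.update_self _ _ _
          _ = Function.update ωh (Sum.inl a) x (Sum.inl a) :=
              (Function.update_self (Sum.inl a) x ωh).symm
      · have hs₂ : s ≠ Sum.inr a := by rintro rfl; exact hc₂S hs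
        calc Function.update ω' (Sum.inl a) (ω' (Sum.inr a)) s
            = ω' s := Function.update_of_ne hs₁ _ _
          _ = Function.update (Function.update ωh (Sum.inl a) x') (Sum.inr a) x s :=
              hagree s (Finset.mem_insert_of_mem (Finset.mem_erase.2 ⟨hs₁, hs⟩))
          _ = Function.update ωh (Sum.inl a) x' s := hupd2_ne x' x s hs₂
          _ = ωh s := Function.update_of_ne hs₁ _ _
          _ = Function.update ωh (Sum.inl a) x s := (Function.update_of_ne hs₁ _ _).symm
    · refine Cyl.congr (fun s hs => ?_) hTB
      have hs₁ : s ≠ Sum.inl a := by rintro rfl; exact hc₁T hs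
      have hs₂ : s ≠ Sum.inr a := by rintro rfl; exact hc₂T hs
      calc Function.update (Function.update ωh (Sum.inl a) x') (Sum.inr a) x s
          = Function.update ωh (Sum.inl a) x' s := hupd2_ne x' x s hs₂
        _ = ωh s := Function.update_of_ne hs₁ _ _
        _ = Function.update ωh (Sum.inl a) x s := (Function.update_of_ne hs₁ _ _).symm
    · show Function.update (Function.update ωh (Sum.inl a) x') (Sum.inr a) x
          ∈ rho (∅ : Finset ι) ⁻¹' U
      simp only [Set.mem_preimage]
      rw [hrho0 x' x]
      exact hx'u
  -- monotonicity of the update map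
  have hle_up : ∀ {x x' : κ a}, x ≤ x' →
      Function.update ωh (Sum.inl a) x ≤ Function.update ωh (Sum.inl a) x' := by
    intro x x' hxx' s
    by_cases hs : s = Sum.inl a
    · subst hs
      rw [Function.update_self, Function.update_self]
      exact hxx'
    · rw [Function.update_of_ne hs, Function.update_of_ne hs]
  -- monotonicity of uu, l₁, l₂
  have huu : IsUpperSet uu := by
    intro x x' hxx' hx
    exact (hU.preimage (rho_mono (∅ : Finset ι))) (hle_up hxx') hx
  have hl₁ : IsLowerSet l₁ := by
    rintro x x' hxx' ⟨S, T, hST, hc₁S, hc₂S, hc₂T, hSA, hTB⟩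
    refine ⟨S, T, hST, hc₁S, hc₂S, hc₂T, ?_, ?_⟩
    · refine Cyl.congr (fun s hs => ?_) hSA
      have hs₁ : s ≠ Sum.inl a := by rintro rfl; exact hc₁S hs
      rw [Function.update_of_ne hs₁, Function.update_of_ne hs₁]
    · exact Cyl.anti (hB.preimage (rho_mono (∅ : Finset ι))) (hle_up hxx') hTB
  have hl₂ : IsLowerSet l₂ := by
    rintro x x' hxx' ⟨S, T, hST, hc₁S, hc₂S, hc₁T, hc₂T, hSA, hTB⟩
    refine ⟨S, T, hST, hc₁S, hc₂S, hc₁T, hc₂T,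
      Cyl.anti (hA.preimage (rho_mono t)) (hle_up hxx') hSA, ?_⟩
    refine Cyl.congr (fun s hs => ?_) hTB
    have hs₁ : s ≠ Sum.inl a := by rintro rfl; exact hc₁T hs
    rw [Function.update_of_ne hs₁, Function.update_of_ne hs₁]
  -- pointwise indicator bounds
  have hle1 : ∀ x y : κ a,
      ind Et (Function.update (Function.update ωh (Sum.inl a) x) (Sum.inr a) y)
        ≤ ind (uu ∩ (l₁ ∪ l₂)) x := by
    intro x y
    by_cases h : Function.update (Function.update ωh (Sum.inl a) x) (Sum.inr a) y ∈ Et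
    · rw [ind_of_mem h, ind_of_mem (hC0 x y h)]
    · rw [ind_of_not_mem h]
      exact ind_nonneg _ _
  have hle2 : ∀ x y : κ a,
      ind (uu ∩ l₁) x + ind l₂ y * ind (uu ∩ l₁ᶜ) x
        ≤ ind Et' (Function.update (Function.update ωh (Sum.inl a) x) (Sum.inr a) y) := by
    intro x y
    by_cases h1 : x ∈ uu ∩ l₁
    · rw [ind_of_mem h1, ind_of_mem (hC1 x h1 y),
        ind_of_not_mem (fun hmem : x ∈ uu ∩ l₁ᶜ => hmem.2 h1.2)]
      norm_num
    · rw [ind_of_not_mem h1, zero_add]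
      by_cases h2 : y ∈ l₂ ∧ x ∈ uu ∩ l₁ᶜ
      · rw [ind_of_mem h2.1, ind_of_mem h2.2, ind_of_mem (hC2 y x h2.1 h2.2.1)]
        norm_num
      · rcases not_and_or.1 h2 with h | h
        · rw [ind_of_not_mem h, zero_mul]
          exact ind_nonneg _ _
        · rw [ind_of_not_mem h, mul_zero]
          exact ind_nonneg _ _
  exact scalar_core (v := hw w (Sum.inl a)) (hw_nonneg hw0 _) (hw_sum_one hw1 _) (hPA a)
    uu l₁ l₂ huu hl₁ hl₂ _ _ hle1 hle2

lemma chain_le (hw0 : ∀ i x, 0 ≤ w i x) (hw1 : ∀ i, ∑ x, w i x = 1)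
    (hPA : ∀ i, PAweight (w i))
    {A B U : Set (∀ i, κ i)} (hA : IsLowerSet A) (hB : IsLowerSet B) (hU : IsUpperSet U) :
    ∀ (m : ℕ) (t : Finset ι), (Finset.univ \ t).card = m →
    Pw (hw w) (Box (rho t ⁻¹' A) (rho ∅ ⁻¹' B) ∩ rho ∅ ⁻¹' U)
      ≤ Pw (hw w) (Box (rho Finset.univ ⁻¹' A) (rho ∅ ⁻¹' B) ∩ rho ∅ ⁻¹' U) := by
  intro m
  induction m with
  | zero =>
    intro t ht
    have htu : t = Finset.univ :=
      Finset.univ_subset_iff.1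
        (Finset.sdiff_eq_empty_iff_subset.1 (Finset.card_eq_zero.1 ht))
    subst htu
    exact le_refl _
  | succ m ih =>
    intro t ht
    have hne : (Finset.univ \ t).Nonempty := Finset.card_pos.1 (by omega)
    obtain ⟨a, ha⟩ := hne
    have hat : a ∉ t := (Finset.mem_sdiff.1 ha).2
    have hcard : (Finset.univ \ insert a t).card = m := by
      have h1 : (Finset.univ \ insert a t).card
          = Finset.univ.card - (insert a t).card :=
        Finset.card_sdiff_of_subset (Finset.subset_univ _)
      have h2 : (Finset.univ \ t).card = Finset.univ.card - t.card :=
        Finset.card_sdiff_of_subset (Finset.subset_univ _)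
      have h3 : t.card ≤ Finset.univ.card := Finset.card_le_univ t
      have h4 : (insert a t).card = t.card + 1 := Finset.card_insert_of_notMem hat
      omega
    exact le_trans (step hw0 hw1 hPA hA hB hU hat) (ih (insert a t) hcard)

/-- **The key BK-type inequality with a monotone weight.** -/
theorem key_ineq (hw0 : ∀ i x, 0 ≤ w i x) (hw1 : ∀ i, ∑ x, w i x = 1)
    (hPA : ∀ i, PAweight (w i))
    {A B U : Set (∀ i, κ i)} (hA : IsLowerSet A) (hB : IsLowerSet B) (hU : IsUpperSet U) :
    Pw w (Box A B ∩ U) ≤ Pw w A * Pw w (B ∩ U) := by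
  classical
  have hG1 : Pw w (Box A B ∩ U)
      ≤ Pw (hw w) (Box (rho (∅ : Finset ι) ⁻¹' A) (rho ∅ ⁻¹' B) ∩ rho ∅ ⁻¹' U) := by
    have hrect := Pw_hat_rect (w := w) Set.univ (Box A B ∩ U)
    have h0 : ({ωh : ∀ s : ι ⊕ ι, κ (selS s) |
          (fun i => ωh (Sum.inr i)) ∈ (Set.univ : Set (∀ i, κ i))} ∩
        {ωh | (fun i => ωh (Sum.inl i)) ∈ Box A B ∩ U})
        = {ωh | (fun i => ωh (Sum.inl i)) ∈ Box A B ∩ U} := by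
      ext ωh; simp
    rw [h0, Pw_univ hw1, one_mul] at hrect
    rw [← hrect]
    apply Pw_mono (hw_nonneg hw0)
    rintro ωh ⟨⟨S, T, hST, hSA, hTB⟩, hUm⟩
    refine ⟨⟨S.image Sum.inl, T.image Sum.inl, ?_, ?_, ?_⟩, ?_⟩
    · rw [Finset.disjoint_left]
      rintro s hsS hsT
      obtain ⟨i, hiS, rfl⟩ := Finset.mem_image.1 hsS
      obtain ⟨j, hjT, hji⟩ := Finset.mem_image.1 hsT
      cases Sum.inl_injective hji
      exact Finset.disjoint_left.1 hST hiS hjT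
    · intro ω' hagree
      show rho (∅ : Finset ι) ω' ∈ A
      rw [rho_empty]
      exact hSA _ (fun i hi => hagree (Sum.inl i) (Finset.mem_image_of_mem _ hi))
    · intro ω' hagree
      show rho (∅ : Finset ι) ω' ∈ B
      rw [rho_empty]
      exact hTB _ (fun i hi => hagree (Sum.inl i) (Finset.mem_image_of_mem _ hi))
    · show ωh ∈ rho (∅ : Finset ι) ⁻¹' U
      simp only [Set.mem_preimage]
      rw [rho_empty]
      exact hUm
  have hG3 : Pw (hw w) (Box (rho (Finset.univ : Finset ι) ⁻¹' A) (rho ∅ ⁻¹' B) ∩ rho ∅ ⁻¹' U)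
      ≤ Pw w A * Pw w (B ∩ U) := by
    rw [← Pw_hat_rect A (B ∩ U)]
    apply Pw_mono (hw_nonneg hw0)
    rintro ωh ⟨hbox, hUm⟩
    obtain ⟨S, T, hST, hSA, hTB⟩ := hbox
    have h1 : rho (Finset.univ : Finset ι) ωh ∈ A := hSA.mem
    have h2 : rho (∅ : Finset ι) ωh ∈ B := hTB.mem
    have h3 : rho (∅ : Finset ι) ωh ∈ U := hUm
    constructor
    · show (fun i => ωh (Sum.inr i)) ∈ A
      rw [← rho_univ]
      exact h1
    · show (fun i => ωh (Sum.inl i)) ∈ B ∩ U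
      rw [← rho_empty]
      exact ⟨h2, h3⟩
  exact le_trans hG1 (le_trans
    (chain_le hw0 hw1 hPA hA hB hU (Finset.univ \ (∅ : Finset ι)).card ∅ rfl) hG3)

end Key

section Outer


variable {n k : ℕ} {Ω : Fin n → Type*}

lemma occurDisjointly_mono {A : Fin k → Set (∀ i, Ω i)} {I' I : Finset (Fin k)} {ω : ∀ i, Ω i}
    (h : I' ⊆ I) : OccurDisjointly A I ω → OccurDisjointly A I' ω := by
  rintro ⟨S, hdisj, hcyl⟩
  exact ⟨S, fun j hj j' hj' hne => hdisj j (h hj) j' (h hj') hne,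
    fun j hj => hcyl j (h hj)⟩

/-- The event that at least `m` of the events indexed by `J` occur disjointly. -/
def DD (A : Fin k → Set (∀ i, Ω i)) (J : Finset (Fin k)) (m : ℕ) : Set (∀ i, Ω i) :=
  {ω | ∃ I : Finset (Fin k), I ⊆ J ∧ I.card = m ∧ OccurDisjointly A I ω}

lemma DD_zero (A : Fin k → Set (∀ i, Ω i)) (J : Finset (Fin k)) :
    DD A J 0 = Set.univ := by
  ext ω
  simp only [DD, Set.mem_setOf_eq, Set.mem_univ, iff_true]
  exact ⟨∅, Finset.empty_subset J, Finset.card_empty,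
    fun _ => ∅, by simp, by simp⟩

lemma DD_empty (A : Fin k → Set (∀ i, Ω i)) (m : ℕ) :
    DD A ∅ (m + 1) = ∅ := by
  ext ω
  simp only [DD, Set.mem_setOf_eq, Set.mem_empty_iff_false, iff_false]
  rintro ⟨I, hIJ, hc, _⟩
  have : I = ∅ := Finset.subset_empty.1 hIJ
  subst this
  simp at hc

lemma DD_succ_subset (A : Fin k → Set (∀ i, Ω i)) (J : Finset (Fin k)) (m : ℕ) :
    DD A J (m + 1) ⊆ DD A J m := by
  rintro ω ⟨I, hIJ, hc, hocc⟩
  obtain ⟨I', hI'I, hc'⟩ := Finset.exists_subset_card_eq (n := m) (by omega : m ≤ I.card)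
  exact ⟨I', hI'I.trans hIJ, hc', occurDisjointly_mono hI'I hocc⟩

lemma DD_le_subset (A : Fin k → Set (∀ i, Ω i)) (J : Finset (Fin k)) {m m' : ℕ}
    (h : m ≤ m') : DD A J m' ⊆ DD A J m := by
  induction m' with
  | zero => have : m = 0 := by omega
            subst this; exact subset_rfl
  | succ m' ih =>
    rcases Nat.lt_or_ge m (m' + 1) with hlt | hge
    · exact (DD_succ_subset A J m').trans (ih (by omega))
    · have : m = m' + 1 := by omega
      subst this; exact subset_rfl

section LowerDD
variable [∀ i, Preorder (Ω i)]

lemma DD_lower {A : Fin k → Set (∀ i, Ω i)} (hA : ∀ j, IsLowerSet (A j))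
    (J : Finset (Fin k)) (m : ℕ) : IsLowerSet (DD A J m) := by
  rintro ω ω' hle ⟨I, hIJ, hc, S, hdisj, hcyl⟩
  refine ⟨I, hIJ, hc, S, hdisj, fun j hj => ?_⟩
  exact Cyl.anti (hA j) hle (hcyl j hj)

end LowerDD

lemma DD_insert_subset (A : Fin k → Set (∀ i, Ω i)) {J : Finset (Fin k)} {a : Fin k}
    (m : ℕ) {ω : ∀ i, Ω i}
    (hω : ω ∈ DD A (insert a J) (m + 1)) (hnot : ω ∉ DD A J (m + 1)) :
    ω ∈ Box (A a) (DD A J m) := by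
  classical
  obtain ⟨I, hIJ, hIcard, S, hdisj, hcyl⟩ := hω
  have haI : a ∈ I := by
    by_contra h
    refine hnot ⟨I, ?_, hIcard, S, hdisj, hcyl⟩
    intro x hx
    rcases Finset.mem_insert.1 (hIJ hx) with rfl | hxJ
    · exact absurd hx h
    · exact hxJ
  refine ⟨S a, (I.erase a).biUnion S, ?_, hcyl a haI, ?_⟩
  · rw [Finset.disjoint_biUnion_right]
    intro j hj
    exact hdisj a haI j (Finset.mem_of_mem_erase hj) (Ne.symm (Finset.mem_erase.1 hj).1)
  · intro ω' hagree
    refine ⟨I.erase a, ?_, ?_, S, ?_, ?_⟩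
    · intro x hx
      rcases Finset.mem_insert.1 (hIJ (Finset.mem_of_mem_erase hx)) with rfl | hxJ
      · exact absurd rfl (Finset.mem_erase.1 hx).1
      · exact hxJ
    · rw [Finset.card_erase_of_mem haI, hIcard]; omega
    · intro j hj j' hj' hne
      exact hdisj j (Finset.mem_of_mem_erase hj) j' (Finset.mem_of_mem_erase hj') hne
    · intro j hj ω'' h''
      refine hcyl j (Finset.mem_of_mem_erase hj) ω'' (fun i hi => ?_)
      rw [h'' i hi, hagree i (Finset.mem_biUnion.2 ⟨j, hj, hi⟩)]

variable [∀ i, Fintype (Ω i)] [∀ i, PartialOrder (Ω i)]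

/-- The main comparison: the weight of `{at least m of the events in J occur disjointly}`
is at most the corresponding independent Bernoulli quantity `y J m`. -/
theorem main_comparison
    {w : ∀ i, Ω i → ℝ} (hw0 : ∀ i x, 0 ≤ w i x) (hw1 : ∀ i, ∑ x, w i x = 1)
    (hPA : ∀ i, PAweight (w i))
    {A : Fin k → Set (∀ i, Ω i)} (hA : ∀ j, IsLowerSet (A j))
    (y : Finset (Fin k) → ℕ → ℝ)
    (hy0 : ∀ J, y J 0 = 1)
    (hynn : ∀ J m, 0 ≤ y J m)
    (hyrec : ∀ J (a : Fin k), a ∉ J → ∀ m : ℕ,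
      y (insert a J) (m + 1) = (1 - Pw w (A a)) * y J (m + 1) + Pw w (A a) * y J m) :
    ∀ (J : Finset (Fin k)) (m : ℕ), Pw w (DD A J m) ≤ y J m := by
  classical
  intro J
  induction J using Finset.induction_on with
  | empty =>
    intro m
    cases m with
    | zero =>
      rw [DD_zero, Pw_univ hw1, hy0]
    | succ m =>
      rw [DD_empty, Pw_empty]
      exact hynn _ _
  | insert _ _ ha ih =>
    rename_i a J
    intro m
    cases m with
    | zero =>
      rw [DD_zero, Pw_univ hw1, hy0]
    | succ m =>
      set p := Pw w (A a) with hp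
      have hp0 : 0 ≤ p := Pw_nonneg hw0 _
      have hp1 : p ≤ 1 := Pw_le_one hw0 hw1 _
      have hsub : DD A (insert a J) (m + 1)
          ⊆ DD A J (m + 1) ∪ (Box (A a) (DD A J m) ∩ (DD A J (m + 1))ᶜ) := by
        intro ω hω
        by_cases h : ω ∈ DD A J (m + 1)
        · exact Or.inl h
        · exact Or.inr ⟨DD_insert_subset A m hω h, h⟩
      have hkey : Pw w (Box (A a) (DD A J m) ∩ (DD A J (m + 1))ᶜ)
          ≤ p * Pw w (DD A J m ∩ (DD A J (m + 1))ᶜ) :=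
        key_ineq hw0 hw1 hPA (hA a) (DD_lower hA J m) (DD_lower hA J (m + 1)).compl
      have hdiff : Pw w (DD A J m ∩ (DD A J (m + 1))ᶜ)
          = Pw w (DD A J m) - Pw w (DD A J (m + 1)) := by
        rw [← Set.diff_eq, Pw_diff (DD_succ_subset A J m)]
      have hunion : Pw w (DD A J (m + 1) ∪ (Box (A a) (DD A J m) ∩ (DD A J (m + 1))ᶜ))
          = Pw w (DD A J (m + 1)) + Pw w (Box (A a) (DD A J m) ∩ (DD A J (m + 1))ᶜ) := by
        refine Pw_union_of_disjoint ?_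
        exact Set.disjoint_left.2 (fun ω hω1 hω2 => hω2.2 hω1)
      have h1 : Pw w (DD A (insert a J) (m + 1))
          ≤ (1 - p) * Pw w (DD A J (m + 1)) + p * Pw w (DD A J m) := by
        calc Pw w (DD A (insert a J) (m + 1))
            ≤ Pw w (DD A J (m + 1) ∪ (Box (A a) (DD A J m) ∩ (DD A J (m + 1))ᶜ)) :=
              Pw_mono hw0 hsub
          _ = Pw w (DD A J (m + 1)) + Pw w (Box (A a) (DD A J m) ∩ (DD A J (m + 1))ᶜ) :=
              hunion
          _ ≤ Pw w (DD A J (m + 1)) + p * (Pw w (DD A J m) - Pw w (DD A J (m + 1))) := by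
              rw [← hdiff]; linarith [hkey]
          _ = (1 - p) * Pw w (DD A J (m + 1)) + p * Pw w (DD A J m) := by ring
      have h2 := ih (m + 1)
      have h3 := ih m
      calc Pw w (DD A (insert a J) (m + 1))
          ≤ (1 - p) * Pw w (DD A J (m + 1)) + p * Pw w (DD A J m) := h1
        _ ≤ (1 - p) * y J (m + 1) + p * y J m := by nlinarith
        _ = y (insert a J) (m + 1) := (hyrec J a ha m).symm

end Outer

section Meas
open MeasureTheory

lemma measure_eq_sum_singletons {α : Type*} [Fintype α] [MeasurableSpace α]
    [MeasurableSingletonClass α] (μ : Measure α) (X : Set α) :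
    μ X = ∑ x ∈ X.toFinite.toFinset, μ {x} := by
  classical
  have hXU : X = ⋃ x ∈ X.toFinite.toFinset, {x} := by
    ext y
    simp only [Set.mem_iUnion, Set.Finite.mem_toFinset, Set.mem_singleton_iff]
    exact ⟨fun h => ⟨y, h, rfl⟩, by rintro ⟨x, hx, rfl⟩; exact hx⟩
  conv_lhs => rw [hXU]
  rw [measure_biUnion_finset ?_ (fun b _ => measurableSet_singleton b)]
  intro x _ y _ hxy
  exact Set.disjoint_singleton.2 hxy

lemma toReal_measure_eq_Pw1 {α : Type*} [Fintype α] [MeasurableSpace α]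
    [MeasurableSingletonClass α] (μ : Measure α) [IsFiniteMeasure μ] (X : Set α) :
    (μ X).toReal = Pw1 (fun x => (μ {x}).toReal) X := by
  classical
  rw [measure_eq_sum_singletons μ X, ENNReal.toReal_sum (fun _ _ => measure_ne_top μ _), Pw1]
  have hX : X.toFinite.toFinset = Finset.univ.filter (fun x => x ∈ X) := by
    ext x; simp [Set.Finite.mem_toFinset, Set.mem_setOf_eq]
  rw [hX, Finset.sum_filter]

lemma sum_toReal_singleton_eq_one {α : Type*} [Fintype α] [MeasurableSpace α]
    [MeasurableSingletonClass α] (μ : Measure α) [IsProbabilityMeasure μ] :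
    ∑ x : α, (μ {x}).toReal = 1 := by
  have h := measure_eq_sum_singletons μ Set.univ
  rw [show (Set.univ : Set α).toFinite.toFinset = Finset.univ by
    ext x; simp [Set.Finite.mem_toFinset, Set.mem_setOf_eq]] at h
  rw [← ENNReal.toReal_sum (fun _ _ => measure_ne_top μ _), ← h, measure_univ,
    ENNReal.toReal_one]

lemma paweight_of_PA {α : Type*} [Fintype α] [Preorder α] [MeasurableSpace α]
    [MeasurableSingletonClass α] (μ : Measure α) [IsProbabilityMeasure μ]
    (h : PositivelyAssociated μ) : PAweight (fun x => (μ {x}).toReal) := by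
  intro P Q hP hQ
  rw [← toReal_measure_eq_Pw1 μ P, ← toReal_measure_eq_Pw1 μ Q,
    ← toReal_measure_eq_Pw1 μ (P ∩ Q), ← ENNReal.toReal_mul]
  exact ENNReal.toReal_mono (measure_ne_top μ _) (h P Q hP hQ)

lemma piMSC {n : ℕ} {Ω : Fin n → Type*} [∀ i, MeasurableSpace (Ω i)]
    [∀ i, MeasurableSingletonClass (Ω i)] : MeasurableSingletonClass (∀ i, Ω i) := by
  refine ⟨fun ω => ?_⟩
  have h : {ω} = ⋂ i, (fun f : ∀ i, Ω i => f i) ⁻¹' {ω i} := by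
    ext x
    simp [funext_iff]
  rw [h]
  exact MeasurableSet.iInter (fun i => measurable_pi_apply i (measurableSet_singleton (ω i)))

lemma pi_toReal_eq_Pw {n : ℕ} {Ω : Fin n → Type*} [∀ i, Fintype (Ω i)]
    [∀ i, MeasurableSpace (Ω i)] [∀ i, MeasurableSingletonClass (Ω i)]
    (μi : ∀ i, Measure (Ω i)) [∀ i, IsProbabilityMeasure (μi i)] (X : Set (∀ i, Ω i)) :
    (Measure.pi μi X).toReal = Pw (fun i x => (μi i {x}).toReal) X := by
  haveI : MeasurableSingletonClass (∀ i, Ω i) := piMSC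
  classical
  rw [measure_eq_sum_singletons (Measure.pi μi) X,
    ENNReal.toReal_sum (fun _ _ => measure_ne_top _ _), Pw]
  have hX : X.toFinite.toFinset = Finset.univ.filter (fun ω => ω ∈ X) := by
    ext ω; simp [Set.Finite.mem_toFinset, Set.mem_setOf_eq]
  rw [hX, Finset.sum_filter]
  refine Finset.sum_congr rfl fun ω _ => ?_
  by_cases hω : ω ∈ X
  · simp only [hω, if_true]
    rw [← Set.univ_pi_singleton ω, Measure.pi_pi, ENNReal.toReal_prod]
  · simp [hω]

end Meas

lemma mem_DD_univ_iff {n k : ℕ} {Ω : Fin n → Type*} (A : Fin k → Set (∀ i, Ω i))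
    (ω : ∀ i, Ω i) (m : ℕ) :
    ω ∈ DD A Finset.univ m ↔ m ≤ maxDisjOcc A ω := by
  have hbd : ∀ m' ∈ {m' : ℕ | ∃ I : Finset (Fin k), I.card = m' ∧ OccurDisjointly A I ω},
      m' ≤ k := by
    rintro m' ⟨I', hc', _⟩
    rw [← hc']
    calc I'.card ≤ Finset.univ.card := Finset.card_le_univ I'
      _ = k := Finset.card_fin k
  constructor
  · rintro ⟨I, _, hc, hocc⟩
    rw [maxDisjOcc]
    exact le_csSup ⟨k, hbd⟩ ⟨I, hc, hocc⟩
  · intro hle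
    rw [maxDisjOcc] at hle
    have hne : {m' : ℕ | ∃ I : Finset (Fin k), I.card = m' ∧ OccurDisjointly A I ω}.Nonempty :=
      ⟨0, ∅, Finset.card_empty, ⟨fun _ => ∅, by simp, by simp⟩⟩
    obtain ⟨I, hc, hocc⟩ := Nat.sSup_mem hne ⟨k, hbd⟩
    have hcard : m ≤ I.card := by rw [hc]; exact hle
    obtain ⟨I', hI'I, hc'⟩ := Finset.exists_subset_card_eq hcard
    exact ⟨I', Finset.subset_univ _, hc', occurDisjointly_mono hI'I hocc⟩

end BKProof

/-- **Extended BK inequality (decreasing events), stochastic domination form.**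
In a finite product probability space with positively associated factors, if
`A 1, …, A k` are decreasing events and `X` is the maximal number of them occurring
disjointly, then `X` is stochastically dominated by a sum `Y` of independent
Bernoulli random variables `Y i` with means `μ (A i)`. -/
theorem extended_BK_decreasing
    {n k : ℕ} {Ω : Fin n → Type*}
    [∀ i, Fintype (Ω i)] [∀ i, PartialOrder (Ω i)]
    [∀ i, MeasurableSpace (Ω i)] [∀ i, MeasurableSingletonClass (Ω i)]
    (μi : ∀ i, Measure (Ω i)) [∀ i, IsProbabilityMeasure (μi i)]
    (hPA : ∀ i, PositivelyAssociated (μi i))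
    (A : Fin k → Set (∀ i, Ω i))
    (hA : ∀ j, IsLowerSet (A j))
    -- an abstract probability space carrying the independent Bernoulli variables
    {Θ : Type*} [MeasurableSpace Θ] (ν : Measure Θ) [IsProbabilityMeasure ν]
    (Y : Fin k → Θ → ℕ)
    (hYmeas : ∀ i, Measurable (Y i))
    (hYindep : iIndepFun Y ν)
    (hYbernoulli : ∀ i θ, Y i θ ≤ 1)
    (hYmean : ∀ i, ν {θ | Y i θ = 1} = Measure.pi μi (A i)) :
    ∀ r : ℝ,
      Measure.pi μi {ω | r ≤ (maxDisjOcc A ω : ℝ)} ≤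
        ν {θ | r ≤ ((∑ i, Y i θ : ℕ) : ℝ)} := by
  intro r
  classical
  rcases le_or_gt r 0 with hr | hr
  · have hset : {θ | r ≤ ((∑ i, Y i θ : ℕ) : ℝ)} = Set.univ := by
      ext θ
      simp only [Set.mem_setOf_eq, Set.mem_univ, iff_true]
      exact hr.trans (Nat.cast_nonneg _)
    rw [hset, measure_univ]
    exact prob_le_one
  · set m := ⌈r⌉₊ with hm
    -- rewrite both events using the natural number `m`
    have hΩset : {ω | r ≤ (maxDisjOcc A ω : ℝ)} = BKProof.DD A Finset.univ m := by
      ext ω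
      simp only [Set.mem_setOf_eq]
      rw [← Nat.ceil_le, ← hm]
      exact (BKProof.mem_DD_univ_iff A ω m).symm
    have hΘset : {θ | r ≤ ((∑ i, Y i θ : ℕ) : ℝ)}
        = {θ | m ≤ ∑ i ∈ Finset.univ, Y i θ} := by
      ext θ
      simp only [Set.mem_setOf_eq]
      rw [← Nat.ceil_le, ← hm]
    rw [hΩset, hΘset]
    -- the weight functions
    set w : ∀ i, Ω i → ℝ := fun i x => (μi i {x}).toReal with hwdef
    have hw0 : ∀ i x, 0 ≤ w i x := fun i x => ENNReal.toReal_nonneg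
    have hw1 : ∀ i, ∑ x, w i x = 1 := fun i => BKProof.sum_toReal_singleton_eq_one (μi i)
    have hwPA : ∀ i, BKProof.PAweight (w i) := fun i => BKProof.paweight_of_PA (μi i) (hPA i)
    -- the Bernoulli side
    set y : Finset (Fin k) → ℕ → ℝ :=
      fun J m' => (ν {θ | m' ≤ ∑ i ∈ J, Y i θ}).toReal with hydef
    have hsum_meas : ∀ J : Finset (Fin k), Measurable (fun θ => ∑ i ∈ J, Y i θ) :=
      fun J => Finset.measurable_sum J (fun i _ => hYmeas i)
    have hy0 : ∀ J, y J 0 = 1 := by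
      intro J
      have h0 : {θ | (0 : ℕ) ≤ ∑ i ∈ J, Y i θ} = Set.univ := by
        ext θ; simp
      rw [hydef]
      simp only
      rw [h0, measure_univ, ENNReal.toReal_one]
    have hynn : ∀ J m', 0 ≤ y J m' := fun J m' => ENNReal.toReal_nonneg
    have hyrec : ∀ (J : Finset (Fin k)) (a : Fin k), a ∉ J → ∀ m' : ℕ,
        y (insert a J) (m' + 1)
          = (1 - BKProof.Pw w (A a)) * y J (m' + 1) + BKProof.Pw w (A a) * y J m' := by
      intro J a ha m'
      have hp : BKProof.Pw w (A a) = (ν {θ | Y a θ = 1}).toReal := by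
        rw [hwdef, ← BKProof.pi_toReal_eq_Pw μi (A a), ← hYmean a]
      have hm1 : MeasurableSet {θ | Y a θ = 1} := hYmeas a (measurableSet_singleton 1)
      have hsplit : {θ | m' + 1 ≤ ∑ i ∈ insert a J, Y i θ}
          = ({θ | Y a θ = 1} ∩ {θ | m' ≤ ∑ i ∈ J, Y i θ})
            ∪ ({θ | Y a θ = 1}ᶜ ∩ {θ | m' + 1 ≤ ∑ i ∈ J, Y i θ}) := by
        ext θ
        simp only [Set.mem_setOf_eq, Set.mem_union, Set.mem_inter_iff, Set.mem_compl_iff]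
        rw [Finset.sum_insert ha]
        rcases Nat.le_one_iff_eq_zero_or_eq_one.1 (hYbernoulli a θ) with h | h <;>
          rw [h] <;> simp <;> omega
      have hdisj : Disjoint ({θ | Y a θ = 1} ∩ {θ | m' ≤ ∑ i ∈ J, Y i θ})
          (({θ | Y a θ = 1}ᶜ ∩ {θ | m' + 1 ≤ ∑ i ∈ J, Y i θ})) :=
        Set.disjoint_left.2 (fun θ h1 h2 => h2.1 h1.1)
      have hmeas2 : MeasurableSet ({θ | Y a θ = 1}ᶜ ∩ {θ | m' + 1 ≤ ∑ i ∈ J, Y i θ}) :=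
        hm1.compl.inter ((hsum_meas J) measurableSet_Ici)
      have hind : IndepFun (Y a) (fun θ => ∑ i ∈ J, Y i θ) ν := by
        have h := (iIndepFun.indepFun_finsetSum_of_notMem hYindep hYmeas ha).symm
        have hfun : (∑ j ∈ J, Y j) = (fun θ => ∑ i ∈ J, Y i θ) := by
          funext θ
          exact Finset.sum_apply θ J Y
        rwa [hfun] at h
      have hfac1 : ν ({θ | Y a θ = 1} ∩ {θ | m' ≤ ∑ i ∈ J, Y i θ})
          = ν {θ | Y a θ = 1} * ν {θ | m' ≤ ∑ i ∈ J, Y i θ} :=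
        hind.measure_inter_preimage_eq_mul {1} (Set.Ici m')
          (measurableSet_singleton 1) measurableSet_Ici
      have hfac2 : ν ({θ | Y a θ = 1}ᶜ ∩ {θ | m' + 1 ≤ ∑ i ∈ J, Y i θ})
          = ν ({θ | Y a θ = 1}ᶜ) * ν {θ | m' + 1 ≤ ∑ i ∈ J, Y i θ} :=
        hind.measure_inter_preimage_eq_mul ({1}ᶜ) (Set.Ici (m' + 1))
          (measurableSet_singleton 1).compl measurableSet_Ici
      have hq : (ν ({θ | Y a θ = 1}ᶜ)).toReal = 1 - (ν {θ | Y a θ = 1}).toReal := by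
        have h := measure_add_measure_compl (μ := ν) hm1
        rw [measure_univ] at h
        have h2 := congrArg ENNReal.toReal h
        rw [ENNReal.toReal_add (measure_ne_top _ _) (measure_ne_top _ _),
          ENNReal.toReal_one] at h2
        linarith
      rw [hydef]
      simp only
      rw [hsplit, measure_union hdisj hmeas2,
        ENNReal.toReal_add (measure_ne_top _ _) (measure_ne_top _ _), hfac1, hfac2,
        ENNReal.toReal_mul, ENNReal.toReal_mul, hq, hp]
      ring
    have hmain := BKProof.main_comparison hw0 hw1 hwPA hA y hy0 hynn hyrec Finset.univ m
    have hL : (Measure.pi μi (BKProof.DD A Finset.univ m)).toReal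
        = BKProof.Pw w (BKProof.DD A Finset.univ m) := BKProof.pi_toReal_eq_Pw μi _
    have hfinal : (Measure.pi μi (BKProof.DD A Finset.univ m)).toReal
        ≤ (ν {θ | m ≤ ∑ i ∈ Finset.univ, Y i θ}).toReal := by
      rw [hL]
      exact hmain
    exact (ENNReal.toReal_le_toReal (measure_ne_top _ _) (measure_ne_top _ _)).1 hfinal
end

section
/- Let (Ω,μ) = ∏_{i=1}^n (Ω_i,μ_i) be a finite product probability space in which each factor Ω_i is partially ordered and each μ_i is positively associated. Let A_1,…,A_k ⊆ Ω be events that are all increasing, define X(ω) = max{|I| : I ⊆ [k] and A_i, i ∈ I, occur disjointly at ω}, and set λ = Σ_{i=1}^k μ(A_i). Then for every t ≥ 0, μ({ω : X(ω) ≥ λ + t}) ≤ exp(−λ φ(t/λ)), where φ(x) = (1+x)log(1+x) − x. -/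
open Finset


open MeasureTheory ProbabilityTheory

/-- The Chernoff rate function `φ(x) = (1+x) log (1+x) − x`. -/
noncomputable def chernoffPhi (x : ℝ) : ℝ := (1 + x) * Real.log (1 + x) - x



section Comb
variable {ι : Type*} [Fintype ι] [DecidableEq ι] {Ω : ι → Type*} [∀ i, Fintype (Ω i)]

def CylEv (A : Set (∀ i, Ω i)) (S : Set ι) : Set (∀ i, Ω i) :=
  {ω | ∀ ω' : ∀ i, Ω i, (∀ i ∈ S, ω' i = ω i) → ω' ∈ A}

def Box2 (A B : Set (∀ i, Ω i)) : Set (∀ i, Ω i) :=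
  {ω | ∃ S T : Set ι, Disjoint S T ∧ ω ∈ CylEv A S ∧ ω ∈ CylEv B T}

variable (Ω) in
noncomputable def asmb (i0 : ι) (y : Ω i0) (x : ∀ j : {j // j ≠ i0}, Ω j) : ∀ i, Ω i :=
  (Equiv.piSplitAt i0 Ω).symm (y, x)

omit [Fintype ι] [∀ i, Fintype (Ω i)] in
lemma asmb_at (i0 : ι) (y : Ω i0) (x) : asmb Ω i0 y x i0 = y := by
  simp [asmb, Equiv.piSplitAt]

omit [Fintype ι] [∀ i, Fintype (Ω i)] in
lemma asmb_ne (i0 : ι) (y : Ω i0) (x) (j : ι) (h : j ≠ i0) :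
    asmb Ω i0 y x j = x ⟨j, h⟩ := by
  simp [asmb, Equiv.piSplitAt, h]

omit [Fintype ι] [∀ i, Fintype (Ω i)] in
lemma asmb_eta (i0 : ι) (ω : ∀ i, Ω i) :
    asmb Ω i0 (ω i0) (fun j => ω j) = ω := by
  have := (Equiv.piSplitAt i0 Ω).symm_apply_apply ω
  simpa [asmb, Equiv.piSplitAt] using this

omit [Fintype ι] [∀ i, Fintype (Ω i)] in
lemma asmb_mono [∀ i, Preorder (Ω i)] (i0 : ι) {y y' : Ω i0} {x x'}
    (hy : y ≤ y') (hx : x ≤ x') : asmb Ω i0 y x ≤ asmb Ω i0 y' x' := by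
  intro j
  by_cases h : j = i0
  · subst h; rw [asmb_at, asmb_at]; exact hy
  · rw [asmb_ne _ _ _ _ h, asmb_ne _ _ _ _ h]; exact hx _

variable (Ω) in
def sectEv (i0 : ι) (A : Set (∀ i, Ω i)) (y : Ω i0) : Set (∀ j : {j // j ≠ i0}, Ω j) :=
  {x | asmb Ω i0 y x ∈ A}

variable (Ω) in
def allSectEv (i0 : ι) (A : Set (∀ i, Ω i)) : Set (∀ j : {j // j ≠ i0}, Ω j) :=
  {x | ∀ y, asmb Ω i0 y x ∈ A}

omit [Fintype ι] [∀ i, Fintype (Ω i)]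

lemma cylEv_subset (A : Set (∀ i, Ω i)) (S : Set ι) : CylEv A S ⊆ A :=
  fun ω h => h ω fun _ _ => rfl

lemma cylEv_mono_set {A : Set (∀ i, Ω i)} {S S' : Set ι} (h : S ⊆ S') :
    CylEv A S ⊆ CylEv A S' :=
  fun ω hω ω' hag => hω ω' fun i hi => hag i (h hi)

lemma box2_subset_inter (A B : Set (∀ i, Ω i)) : Box2 A B ⊆ A ∩ B := by
  rintro ω ⟨S, T, -, hA, hB⟩
  exact ⟨cylEv_subset A S hA, cylEv_subset B T hB⟩

lemma box2_mono {A A' B B' : Set (∀ i, Ω i)} (hA : A ⊆ A') (hB : B ⊆ B') :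
    Box2 A B ⊆ Box2 A' B' := by
  rintro ω ⟨S, T, hd, h1, h2⟩
  exact ⟨S, T, hd, fun ω' hag => hA (h1 ω' hag), fun ω' hag => hB (h2 ω' hag)⟩

lemma isUpperSet_cylEv [∀ i, Preorder (Ω i)] {A : Set (∀ i, Ω i)} (hA : IsUpperSet A)
    (S : Set ι) : IsUpperSet (CylEv A S) := by
  classical
  intro ω σ hle hω σ' hag
  have h1 : (fun i => if i ∈ S then ω i else σ' i) ∈ A := by
    apply hω
    intro i hi
    simp [hi]
  refine hA (fun i => ?_) h1
  by_cases hi : i ∈ S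
  · simp only [hi, if_pos]
    exact (hag i hi) ▸ (hle i)
  · simp [hi]

lemma isUpperSet_box2 [∀ i, Preorder (Ω i)] {A B : Set (∀ i, Ω i)}
    (hA : IsUpperSet A) (hB : IsUpperSet B) : IsUpperSet (Box2 A B) := by
  rintro ω σ hle ⟨S, T, hd, h1, h2⟩
  exact ⟨S, T, hd, isUpperSet_cylEv hA S hle h1, isUpperSet_cylEv hB T hle h2⟩

/-- The key section formula. -/
lemma box2_section (i0 : ι) (A B : Set (∀ i, Ω i)) (y : Ω i0)
    (x : ∀ j : {j // j ≠ i0}, Ω j) :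
    asmb Ω i0 y x ∈ Box2 A B ↔
      x ∈ Box2 (sectEv Ω i0 A y) (allSectEv Ω i0 B) ∪
          Box2 (allSectEv Ω i0 A) (sectEv Ω i0 B y) := by
  constructor
  · rintro ⟨S, T, hd, hSA, hTB⟩
    by_cases hT : i0 ∈ T
    · -- right branch : i0 used by B
      right
      refine ⟨{j | (j : ι) ∈ S}, {j | (j : ι) ∈ T}, ?_, ?_, ?_⟩
      · rw [Set.disjoint_left]; intro j hj hj'
        exact Set.disjoint_left.mp hd hj hj'
      · -- CylEv (allSectEv A) S'
        intro x' hag y''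
        apply hSA
        intro i hi
        have hne : i ≠ i0 := fun h => Set.disjoint_left.mp hd (h ▸ hi) hT
        rw [asmb_ne _ _ _ _ hne, asmb_ne _ _ _ _ hne]
        exact hag ⟨i, hne⟩ hi
      · -- CylEv (sectEv B y) T'
        intro x' hag
        show asmb Ω i0 y x' ∈ B
        apply hTB
        intro i hi
        by_cases hne : i = i0
        · subst hne; rw [asmb_at, asmb_at]
        · rw [asmb_ne _ _ _ _ hne, asmb_ne _ _ _ _ hne]
          exact hag ⟨i, hne⟩ hi
    · -- left branch : i0 not used by B
      left
      refine ⟨{j | (j : ι) ∈ S}, {j | (j : ι) ∈ T}, ?_, ?_, ?_⟩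
      · rw [Set.disjoint_left]; intro j hj hj'
        exact Set.disjoint_left.mp hd hj hj'
      · intro x' hag
        show asmb Ω i0 y x' ∈ A
        apply hSA
        intro i hi
        by_cases hne : i = i0
        · subst hne; rw [asmb_at, asmb_at]
        · rw [asmb_ne _ _ _ _ hne, asmb_ne _ _ _ _ hne]
          exact hag ⟨i, hne⟩ hi
      · intro x' hag y''
        apply hTB
        intro i hi
        have hne : i ≠ i0 := fun h => hT (h ▸ hi)
        rw [asmb_ne _ _ _ _ hne, asmb_ne _ _ _ _ hne]
        exact hag ⟨i, hne⟩ hi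
  · rintro (⟨S', T', hd, h1, h2⟩ | ⟨S', T', hd, h1, h2⟩)
    · -- A gets i0
      refine ⟨Subtype.val '' S' ∪ {i0}, Subtype.val '' T', ?_, ?_, ?_⟩
      · rw [Set.disjoint_left]
        rintro i (⟨j, hj, rfl⟩ | hi) ⟨j', hj', hjj'⟩
        · exact Set.disjoint_left.mp hd hj (by rwa [show j' = j from Subtype.val_injective hjj'] at hj')
        · exact j'.2 (hjj'.trans hi)
      · intro ω' hag
        have h0 : ω' i0 = y := by
          rw [hag i0 (Or.inr rfl), asmb_at]
        have : (fun j : {j // j ≠ i0} => ω' j) ∈ sectEv Ω i0 A y := by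
          apply h1
          intro j hj
          exact (hag j (Or.inl ⟨j, hj, rfl⟩)).trans (asmb_ne _ _ _ _ j.2)
        have he := asmb_eta i0 ω'
        rw [h0] at he
        exact he ▸ this
      · intro ω' hag
        have : (fun j : {j // j ≠ i0} => ω' j) ∈ allSectEv Ω i0 B := by
          apply h2
          intro j hj
          exact (hag j ⟨j, hj, rfl⟩).trans (asmb_ne _ _ _ _ j.2)
        have he := asmb_eta i0 ω'
        exact he ▸ this (ω' i0)
    · -- B gets i0
      refine ⟨Subtype.val '' S', Subtype.val '' T' ∪ {i0}, ?_, ?_, ?_⟩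
      · rw [Set.disjoint_left]
        rintro i ⟨j, hj, rfl⟩ (⟨j', hj', hjj'⟩ | hi)
        · exact Set.disjoint_left.mp hd (by rwa [show j = j' from Subtype.val_injective hjj'.symm] at hj) hj'
        · exact j.2 hi
      · intro ω' hag
        have : (fun j : {j // j ≠ i0} => ω' j) ∈ allSectEv Ω i0 A := by
          apply h1
          intro j hj
          exact (hag j ⟨j, hj, rfl⟩).trans (asmb_ne _ _ _ _ j.2)
        have he := asmb_eta i0 ω'
        exact he ▸ this (ω' i0)
      · intro ω' hag
        have h0 : ω' i0 = y := by
          rw [hag i0 (Or.inr rfl), asmb_at]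
        have : (fun j : {j // j ≠ i0} => ω' j) ∈ sectEv Ω i0 B y := by
          apply h2
          intro j hj
          exact (hag j (Or.inl ⟨j, hj, rfl⟩)).trans (asmb_ne _ _ _ _ j.2)
        have he := asmb_eta i0 ω'
        rw [h0] at he
        exact he ▸ this

end Comb

section PWsec
variable {ι : Type*} [Fintype ι] [DecidableEq ι] {Ω : ι → Type*} [∀ i, Fintype (Ω i)]

noncomputable def PW (w : ∀ i, Ω i → ℝ) (s : Set (∀ i, Ω i)) : ℝ :=
  ∑ ω : ∀ i, Ω i, s.indicator (fun ω => ∏ i, w i (ω i)) ω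

variable {w : ∀ i, Ω i → ℝ}

lemma PW_nonneg (hw0 : ∀ i a, 0 ≤ w i a) (s : Set (∀ i, Ω i)) : 0 ≤ PW w s :=
  Finset.sum_nonneg fun ω _ => Set.indicator_nonneg
    (fun _ _ => Finset.prod_nonneg fun i _ => hw0 i _) _

lemma PW_mono (hw0 : ∀ i a, 0 ≤ w i a) {s t : Set (∀ i, Ω i)} (h : s ⊆ t) :
    PW w s ≤ PW w t :=
  Finset.sum_le_sum fun ω _ => Set.indicator_le_indicator_of_subset h
    (fun _ => Finset.prod_nonneg fun i _ => hw0 i _) _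

lemma PW_union_add_inter (s t : Set (∀ i, Ω i)) :
    PW w (s ∪ t) + PW w (s ∩ t) = PW w s + PW w t := by
  classical
  unfold PW
  rw [← Finset.sum_add_distrib, ← Finset.sum_add_distrib]
  refine Finset.sum_congr rfl fun ω _ => ?_
  by_cases hs : ω ∈ s <;> by_cases ht : ω ∈ t <;>
    simp [Set.indicator_apply, hs, ht]

lemma PW_univ (hw1 : ∀ i, ∑ a, w i a = 1) : PW w Set.univ = 1 := by
  classical
  unfold PW
  simp only [Set.indicator_univ]
  rw [← Fintype.prod_sum]
  simp [hw1]

/-- splitting a sum over the pi type -/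
lemma sum_split (i0 : ι) (F : (∀ i, Ω i) → ℝ) :
    ∑ ω : ∀ i, Ω i, F ω = ∑ y : Ω i0, ∑ x : ∀ j : {j // j ≠ i0}, Ω j, F (asmb Ω i0 y x) := by
  have h1 : ∑ ω : ∀ i, Ω i, F ω = ∑ p : Ω i0 × ∀ j : {j // j ≠ i0}, Ω j,
      F ((Equiv.piSplitAt i0 Ω).symm p) :=
    Fintype.sum_equiv (Equiv.piSplitAt i0 Ω) _ _ (fun ω => by
      rw [Equiv.symm_apply_apply])
  rw [h1, Fintype.sum_prod_type]
  rfl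

lemma prod_split (i0 : ι) (y : Ω i0) (x) :
    ∏ i, w i (asmb Ω i0 y x i) = w i0 y * ∏ j : {j // j ≠ i0}, w j (x j) := by
  rw [← Finset.mul_prod_erase univ _ (mem_univ i0), asmb_at]
  congr 1
  rw [Finset.prod_subtype (univ.erase i0) (p := fun j => j ≠ i0) (by simp)]
  exact Finset.prod_congr rfl fun j _ => by rw [asmb_ne _ _ _ _ j.2]

lemma PW_split (i0 : ι) (s : Set (∀ i, Ω i)) :
    PW w s = ∑ y : Ω i0, w i0 y *
      PW (fun j : {j // j ≠ i0} => w j) (sectEv Ω i0 s y) := by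
  rw [PW, sum_split i0]
  refine Finset.sum_congr rfl fun y _ => ?_
  rw [PW, Finset.mul_sum]
  refine Finset.sum_congr rfl fun x _ => ?_
  by_cases h : asmb Ω i0 y x ∈ s
  · rw [Set.indicator_of_mem h, Set.indicator_of_mem (by exact h), prod_split]
  · rw [Set.indicator_of_notMem h, Set.indicator_of_notMem (by exact h), mul_zero]

lemma isUpperSet_sectEv [∀ i, Preorder (Ω i)] (i0 : ι) {A : Set (∀ i, Ω i)}
    (hA : IsUpperSet A) (y : Ω i0) : IsUpperSet (sectEv Ω i0 A y) :=
  fun _ _ hle hx => hA (asmb_mono i0 le_rfl hle) hx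

lemma isUpperSet_allSectEv [∀ i, Preorder (Ω i)] (i0 : ι) {A : Set (∀ i, Ω i)}
    (hA : IsUpperSet A) : IsUpperSet (allSectEv Ω i0 A) :=
  fun _ _ hle hx y => hA (asmb_mono i0 le_rfl hle) (hx y)

lemma sectEv_mono_y [∀ i, Preorder (Ω i)] (i0 : ι) {A : Set (∀ i, Ω i)}
    (hA : IsUpperSet A) {y y' : Ω i0} (h : y ≤ y') :
    sectEv Ω i0 A y ⊆ sectEv Ω i0 A y' :=
  fun _ hx => hA (asmb_mono i0 h le_rfl) hx

lemma allSectEv_subset_sectEv (i0 : ι) (A : Set (∀ i, Ω i)) (y : Ω i0) :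
    allSectEv Ω i0 A ⊆ sectEv Ω i0 A y :=
  fun _ hx => hx y

lemma sectEv_box2 (i0 : ι) (A B : Set (∀ i, Ω i)) (y : Ω i0) :
    sectEv Ω i0 (Box2 A B) y =
      Box2 (sectEv Ω i0 A y) (allSectEv Ω i0 B) ∪
      Box2 (allSectEv Ω i0 A) (sectEv Ω i0 B y) :=
  Set.ext fun x => box2_section i0 A B y x

end PWsec

section PAstep

lemma PA_double_sum {Λ P : Type*} [Fintype Λ] [Fintype P] [Preorder Λ]
    (m : Λ → ℝ) (q : P → ℝ) (hq : ∀ x, 0 ≤ q x)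
    (hPA : ∀ U V : Set Λ, IsUpperSet U → IsUpperSet V →
      (∑ y, U.indicator m y) * (∑ y, V.indicator m y) ≤ ∑ y, (U ∩ V).indicator m y)
    (C E : Λ → Set P)
    (hC : ∀ x : P, IsUpperSet {y | x ∈ C y}) (hE : ∀ x : P, IsUpperSet {y | x ∈ E y}) :
    ∑ y, ∑ y', m y * m y' * ∑ x, ((C y ∩ E y').indicator q x) ≤
      ∑ y, m y * ∑ x, ((C y ∩ E y).indicator q x) := by
  classical
  have hL : ∑ y, ∑ y', m y * m y' * ∑ x, ((C y ∩ E y').indicator q x)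
      = ∑ x, ((∑ y, ({y | x ∈ C y} : Set Λ).indicator m y) *
          (∑ y, ({y | x ∈ E y} : Set Λ).indicator m y)) * q x := by
    have h1 : ∀ y y', m y * m y' * ∑ x, ((C y ∩ E y').indicator q x)
        = ∑ x, m y * m y' * (C y ∩ E y').indicator q x := fun y y' => Finset.mul_sum _ _ _
    simp_rw [h1]
    have h2 : ∀ y, ∑ y', ∑ x, m y * m y' * (C y ∩ E y').indicator q x
        = ∑ x, ∑ y', m y * m y' * (C y ∩ E y').indicator q x := fun y => Finset.sum_comm
    simp_rw [h2]
    rw [Finset.sum_comm]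
    refine Finset.sum_congr rfl fun x _ => ?_
    rw [Finset.sum_mul_sum, Finset.sum_mul]
    refine Finset.sum_congr rfl fun y _ => ?_
    rw [Finset.sum_mul]
    refine Finset.sum_congr rfl fun y' _ => ?_
    by_cases h1 : x ∈ C y <;> by_cases h2 : x ∈ E y' <;>
      simp [Set.indicator_apply, h1, h2] <;> ring
  have hR : ∑ y, m y * ∑ x, ((C y ∩ E y).indicator q x)
      = ∑ x, (∑ y, (({y | x ∈ C y} ∩ {y | x ∈ E y}) : Set Λ).indicator m y) * q x := by
    have h1 : ∀ y, m y * ∑ x, ((C y ∩ E y).indicator q x)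
        = ∑ x, m y * (C y ∩ E y).indicator q x := fun y => Finset.mul_sum _ _ _
    simp_rw [h1]
    rw [Finset.sum_comm]
    refine Finset.sum_congr rfl fun x _ => ?_
    rw [Finset.sum_mul]
    refine Finset.sum_congr rfl fun y _ => ?_
    by_cases h1 : x ∈ C y <;> by_cases h2 : x ∈ E y <;>
      simp [Set.indicator_apply, h1, h2] <;> ring
  rw [hL, hR]
  exact Finset.sum_le_sum fun x _ =>
    mul_le_mul_of_nonneg_right (hPA _ _ (hC x) (hE x)) (hq x)

end PAstep

section BKmain

theorem BK2_aux : ∀ (N : ℕ) (ι : Type) [Fintype ι] [DecidableEq ι]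
    (_ : Fintype.card ι = N)
    (Ω : ι → Type v) [∀ i, Fintype (Ω i)] [∀ i, Preorder (Ω i)]
    (w : ∀ i, Ω i → ℝ) (_ : ∀ i a, 0 ≤ w i a) (_ : ∀ i, ∑ a, w i a = 1)
    (_ : ∀ i (U V : Set (Ω i)), IsUpperSet U → IsUpperSet V →
      (∑ a, U.indicator (w i) a) * (∑ a, V.indicator (w i) a) ≤
        ∑ a, (U ∩ V).indicator (w i) a)
    (A B : Set (∀ i, Ω i)), IsUpperSet A → IsUpperSet B →
    PW w (Box2 A B) ≤ PW w A * PW w B := by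
  intro N
  induction N with
  | zero =>
    intro ι _ _ hN Ω _ _ w hw0 hw1 hPA A B _ _
    classical
    haveI : IsEmpty ι := Fintype.card_eq_zero_iff.mp hN
    haveI : Unique (∀ i, Ω i) := Pi.uniqueOfIsEmpty Ω
    have hPW : ∀ s : Set (∀ i, Ω i), PW w s = if default ∈ s then 1 else 0 := by
      intro s
      rw [PW, Fintype.sum_unique]
      by_cases h : (default : ∀ i, Ω i) ∈ s <;>
        simp [Set.indicator_apply, h, Finset.univ_eq_empty]
    have hbox : PW w (Box2 A B) ≤ PW w (A ∩ B) :=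
      PW_mono hw0 (box2_subset_inter A B)
    rw [hPW (A ∩ B)] at hbox
    rw [hPW A, hPW B]
    by_cases h1 : default ∈ A
    · by_cases h2 : default ∈ B
      · have h3 : (default : ∀ i, Ω i) ∈ A ∩ B := ⟨h1, h2⟩
        simp only [h3, if_true] at hbox
        simp only [h1, h2, if_true, mul_one]
        linarith
      · have h3 : (default : ∀ i, Ω i) ∉ A ∩ B := fun hc => h2 hc.2
        simp only [h3, if_false] at hbox
        simp only [h1, h2, if_true, if_false, mul_zero]
        linarith
    · by_cases h2 : default ∈ B
      · have h3 : (default : ∀ i, Ω i) ∉ A ∩ B := fun hc => h1 hc.1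
        simp only [h3, if_false] at hbox
        simp only [h1, h2, if_true, if_false, zero_mul]
        linarith
      · have h3 : (default : ∀ i, Ω i) ∉ A ∩ B := fun hc => h1 hc.1
        simp only [h3, if_false] at hbox
        simp only [h1, h2, if_false, zero_mul]
        linarith
  | succ N IH =>
    intro ι _ _ hN Ω _ _ w hw0 hw1 hPA A B hA hB
    haveI : Nonempty ι := Fintype.card_pos_iff.mp (by omega)
    obtain ⟨i0⟩ := ‹Nonempty ι›
    have hcard : Fintype.card {j : ι // j ≠ i0} = N := by
      have h := Fintype.card_subtype_compl (fun j : ι => j = i0)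
      simp only [Fintype.card_subtype_eq] at h
      have h2 : Fintype.card {j : ι // j ≠ i0} = Fintype.card ι - 1 := h
      omega
    set w' : ∀ j : {j : ι // j ≠ i0}, Ω j → ℝ := fun j => w j with hw'
    set ν : Set (∀ j : {j : ι // j ≠ i0}, Ω j) → ℝ := PW w' with hν
    set m : Ω i0 → ℝ := w i0 with hm
    set SA : Ω i0 → Set (∀ j : {j : ι // j ≠ i0}, Ω j) := sectEv Ω i0 A with hSA
    set SB : Ω i0 → Set (∀ j : {j : ι // j ≠ i0}, Ω j) := sectEv Ω i0 B with hSB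
    set C : Ω i0 → Set (∀ j : {j : ι // j ≠ i0}, Ω j) :=
      fun y => Box2 (sectEv Ω i0 A y) (allSectEv Ω i0 B) with hC
    set E : Ω i0 → Set (∀ j : {j : ι // j ≠ i0}, Ω j) :=
      fun y => Box2 (allSectEv Ω i0 A) (sectEv Ω i0 B y) with hE
    have hw0' : ∀ (j : {j : ι // j ≠ i0}) a, 0 ≤ w' j a := fun j a => hw0 j a
    have hIH : ∀ (A' B' : Set (∀ j : {j : ι // j ≠ i0}, Ω j)),
        IsUpperSet A' → IsUpperSet B' → ν (Box2 A' B') ≤ ν A' * ν B' :=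
      fun A' B' hA' hB' =>
        IH {j : ι // j ≠ i0} hcard (fun j => Ω j) w' hw0' (fun j => hw1 j)
          (fun j => hPA j) A' B' hA' hB'
    have hm0 : ∀ y, 0 ≤ m y := fun y => hw0 i0 y
    have hm1 : ∑ y, m y = 1 := hw1 i0
    have hsplit : PW w (Box2 A B) = ∑ y, m y * ν (C y ∪ E y) := by
      rw [PW_split i0]
      exact Finset.sum_congr rfl fun y _ => by rw [sectEv_box2]
    have hAs : PW w A = ∑ y, m y * ν (SA y) := PW_split i0 A
    have hBs : PW w B = ∑ y, m y * ν (SB y) := PW_split i0 B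
    have hCE : ∀ y y', ν (C y ∪ E y') = ν (C y) + ν (E y') - ν (C y ∩ E y') := by
      intro y y'
      have := PW_union_add_inter (w := w') (C y) (E y')
      linarith
    have hCup : ∀ x, IsUpperSet {y : Ω i0 | x ∈ C y} := by
      intro x y y' hle hx
      exact box2_mono (sectEv_mono_y i0 hA hle) (Set.Subset.refl _) hx
    have hEup : ∀ x, IsUpperSet {y : Ω i0 | x ∈ E y} := by
      intro x y y' hle hx
      exact box2_mono (Set.Subset.refl _) (sectEv_mono_y i0 hB hle) hx
    have hPAs : ∑ y, ∑ y', m y * m y' * ν (C y ∩ E y') ≤ ∑ y, m y * ν (C y ∩ E y) :=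
      PA_double_sum m _ (fun x => Finset.prod_nonneg fun j _ => hw0' j _)
        (hPA i0) C E hCup hEup
    have eC : ∀ y, ∑ y', m y * m y' * ν (C y) = m y * ν (C y) := by
      intro y
      calc ∑ y', m y * m y' * ν (C y) = ∑ y', (m y * ν (C y)) * m y' :=
            Finset.sum_congr rfl fun y' _ => by ring
        _ = (m y * ν (C y)) * ∑ y', m y' := (Finset.mul_sum _ _ _).symm
        _ = m y * ν (C y) := by rw [hm1, mul_one]
    have eE : ∑ y : Ω i0, ∑ y', m y * m y' * ν (E y') = ∑ y', m y' * ν (E y') := by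
      calc ∑ y : Ω i0, ∑ y', m y * m y' * ν (E y')
          = ∑ y : Ω i0, m y * ∑ y', m y' * ν (E y') := by
            refine Finset.sum_congr rfl fun y _ => ?_
            rw [Finset.mul_sum]
            exact Finset.sum_congr rfl fun y' _ => by ring
        _ = (∑ y, m y) * ∑ y', m y' * ν (E y') := (Finset.sum_mul _ _ _).symm
        _ = _ := by rw [hm1, one_mul]
    have L1 : ∑ y, ∑ y', m y * m y' * ν (C y ∪ E y')
        = (∑ y, m y * ν (C y)) + (∑ y', m y' * ν (E y'))
          - ∑ y, ∑ y', m y * m y' * ν (C y ∩ E y') := by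
      have h : ∀ y y', m y * m y' * ν (C y ∪ E y')
          = m y * m y' * ν (C y) + m y * m y' * ν (E y')
            - m y * m y' * ν (C y ∩ E y') := fun y y' => by rw [hCE]; ring
      simp_rw [h, Finset.sum_sub_distrib, Finset.sum_add_distrib]
      rw [Finset.sum_congr rfl fun y _ => eC y, eE]
    have L2 : PW w (Box2 A B) = (∑ y, m y * ν (C y)) + (∑ y, m y * ν (E y))
        - ∑ y, m y * ν (C y ∩ E y) := by
      rw [hsplit]
      have h : ∀ y, m y * ν (C y ∪ E y)
          = m y * ν (C y) + m y * ν (E y) - m y * ν (C y ∩ E y) := fun y => by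
        rw [hCE]; ring
      simp_rw [h, Finset.sum_sub_distrib, Finset.sum_add_distrib]
    have step2 : ∑ y, ∑ y', m y * m y' * ν (C y ∪ E y')
        ≤ ∑ y, ∑ y', m y * m y' * (ν (SA y) * ν (SB y')) := by
      refine Finset.sum_le_sum fun y _ => Finset.sum_le_sum fun y' _ => ?_
      refine mul_le_mul_of_nonneg_left ?_ (mul_nonneg (hm0 y) (hm0 y'))
      calc ν (C y ∪ E y') ≤ ν (Box2 (SA y) (SB y')) := by
            refine PW_mono hw0' ?_
            rintro x (hx | hx)
            · exact box2_mono (Set.Subset.refl _) (allSectEv_subset_sectEv i0 B y') hx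
            · exact box2_mono (allSectEv_subset_sectEv i0 A y) (Set.Subset.refl _) hx
        _ ≤ ν (SA y) * ν (SB y') :=
            hIH _ _ (isUpperSet_sectEv i0 hA y) (isUpperSet_sectEv i0 hB y')
    have step3 : ∑ y, ∑ y', m y * m y' * (ν (SA y) * ν (SB y'))
        = PW w A * PW w B := by
      rw [hAs, hBs, Finset.sum_mul_sum]
      exact Finset.sum_congr rfl fun y _ => Finset.sum_congr rfl fun y' _ => by ring
    linarith
end BKmain

section BKwrap

theorem BK2 {ι : Type} [Fintype ι] [DecidableEq ι]
    (Ω : ι → Type v) [∀ i, Fintype (Ω i)] [∀ i, Preorder (Ω i)]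
    (w : ∀ i, Ω i → ℝ) (hw0 : ∀ i a, 0 ≤ w i a) (hw1 : ∀ i, ∑ a, w i a = 1)
    (hPA : ∀ i (U V : Set (Ω i)), IsUpperSet U → IsUpperSet V →
      (∑ a, U.indicator (w i) a) * (∑ a, V.indicator (w i) a) ≤
        ∑ a, (U ∩ V).indicator (w i) a)
    (A B : Set (∀ i, Ω i)) (hA : IsUpperSet A) (hB : IsUpperSet B) :
    PW w (Box2 A B) ≤ PW w A * PW w B :=
  BK2_aux (Fintype.card ι) ι rfl Ω w hw0 hw1 hPA A B hA hB

end BKwrap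

section Kevents

variable {n k : ℕ} {Ω : Fin n → Type*} [∀ i, Fintype (Ω i)] [∀ i, Preorder (Ω i)]

lemma occur_empty (A : Fin k → Set (∀ i, Ω i)) (ω : ∀ i, Ω i) :
    OccurDisjointly A ∅ ω :=
  ⟨fun _ => ∅, fun j hj => absurd hj (Finset.notMem_empty j), fun j hj => absurd hj (Finset.notMem_empty j)⟩

lemma occur_mono {A : Fin k → Set (∀ i, Ω i)} {I J : Finset (Fin k)} (hJI : J ⊆ I)
    {ω : ∀ i, Ω i} (h : OccurDisjointly A I ω) : OccurDisjointly A J ω := by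
  obtain ⟨S, hd, hc⟩ := h
  exact ⟨S, fun j hj j' hj' => hd j (hJI hj) j' (hJI hj'), fun j hj => hc j (hJI hj)⟩

lemma isUpperSet_occur {A : Fin k → Set (∀ i, Ω i)} (hA : ∀ j, IsUpperSet (A j))
    (I : Finset (Fin k)) : IsUpperSet {ω | OccurDisjointly A I ω} := by
  classical
  rintro ω σ hle ⟨S, hd, hc⟩
  refine ⟨S, hd, fun j hj σ' hag => ?_⟩
  have h1 : (fun i => if i ∈ S j then ω i else σ' i) ∈ A j := by
    apply hc j hj
    intro i hi
    simp [hi]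
  refine hA j (fun i => ?_) h1
  by_cases hi : i ∈ S j
  · simp only [hi, if_pos]
    exact (hag i hi) ▸ (hle i)
  · simp [hi]

lemma occur_subset_box2 {A : Fin k → Set (∀ i, Ω i)} {I : Finset (Fin k)}
    {j0 : Fin k} (hj0 : j0 ∉ I) :
    {ω | OccurDisjointly A (insert j0 I) ω} ⊆
      Box2 (A j0) {ω | OccurDisjointly A I ω} := by
  rintro ω ⟨S, hd, hc⟩
  refine ⟨(S j0 : Set (Fin n)), ⋃ j ∈ I, (S j : Set (Fin n)), ?_, ?_, ?_⟩
  · rw [Set.disjoint_iUnion_right]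
    intro j
    rw [Set.disjoint_iUnion_right]
    intro hj
    rw [Finset.disjoint_coe]
    exact hd j0 (Finset.mem_insert_self j0 I) j (Finset.mem_insert_of_mem hj)
      (fun h => hj0 (h ▸ hj))
  · intro ω' hag
    exact hc j0 (Finset.mem_insert_self j0 I) ω' fun i hi => hag i hi
  · intro ω' hag
    refine ⟨S, fun j hj j' hj' hne =>
      hd j (Finset.mem_insert_of_mem hj) j' (Finset.mem_insert_of_mem hj') hne,
      fun j hj ω'' hag'' => ?_⟩
    apply hc j (Finset.mem_insert_of_mem hj)
    intro i hi
    rw [hag'' i hi]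
    exact hag i (Set.mem_biUnion hj hi)

lemma PW_occur_le_prod (w : ∀ i, Ω i → ℝ) (hw0 : ∀ i a, 0 ≤ w i a)
    (hw1 : ∀ i, ∑ a, w i a = 1)
    (hPA : ∀ i (U V : Set (Ω i)), IsUpperSet U → IsUpperSet V →
      (∑ a, U.indicator (w i) a) * (∑ a, V.indicator (w i) a) ≤
        ∑ a, (U ∩ V).indicator (w i) a)
    (A : Fin k → Set (∀ i, Ω i)) (hA : ∀ j, IsUpperSet (A j)) (I : Finset (Fin k)) :
    PW w {ω | OccurDisjointly A I ω} ≤ ∏ j ∈ I, PW w (A j) := by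
  classical
  induction I using Finset.induction_on with
  | empty =>
    rw [Finset.prod_empty]
    calc PW w {ω | OccurDisjointly A ∅ ω} ≤ PW w Set.univ :=
          PW_mono hw0 (Set.subset_univ _)
      _ = 1 := PW_univ hw1
  | insert j0 I' hj0 ih =>
    rw [Finset.prod_insert hj0]
    calc PW w {ω | OccurDisjointly A (insert j0 I') ω}
        ≤ PW w (Box2 (A j0) {ω | OccurDisjointly A I' ω}) :=
          PW_mono hw0 (occur_subset_box2 hj0)
      _ ≤ PW w (A j0) * PW w {ω | OccurDisjointly A I' ω} :=
          BK2 Ω w hw0 hw1 hPA _ _ (hA j0) (isUpperSet_occur hA I')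
      _ ≤ PW w (A j0) * ∏ j ∈ I', PW w (A j) :=
          mul_le_mul_of_nonneg_left ih (PW_nonneg hw0 _)

end Kevents

section Esymm
open Finset
variable {α : Type*} [DecidableEq α] [Fintype α]

lemma sum_insert_reindex (r : ℕ) (f : Finset α → ℝ) :
    ∑ I ∈ powersetCard r (univ : Finset α), ∑ j ∈ univ \ I, f (insert j I)
      = ∑ K ∈ powersetCard (r+1) (univ : Finset α), ∑ j ∈ K, f K := by
  rw [Finset.sum_sigma', Finset.sum_sigma']
  refine Finset.sum_nbij' (fun x => ⟨insert x.2 x.1, x.2⟩)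
    (fun x => ⟨x.1.erase x.2, x.2⟩) ?_ ?_ ?_ ?_ ?_
  · rintro ⟨I, j⟩ hx
    rw [Finset.mem_sigma] at hx
    obtain ⟨hI, hj⟩ := hx
    rw [Finset.mem_powersetCard] at hI
    rw [Finset.mem_sdiff] at hj
    rw [Finset.mem_sigma, Finset.mem_powersetCard]
    refine ⟨⟨Finset.subset_univ _, ?_⟩, Finset.mem_insert_self _ _⟩
    rw [Finset.card_insert_of_notMem hj.2, hI.2]
  · rintro ⟨K, j⟩ hx
    rw [Finset.mem_sigma] at hx
    obtain ⟨hK, hj⟩ := hx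
    rw [Finset.mem_powersetCard] at hK
    rw [Finset.mem_sigma, Finset.mem_powersetCard]
    refine ⟨⟨Finset.subset_univ _, ?_⟩, ?_⟩
    · rw [Finset.card_erase_of_mem hj, hK.2]
      omega
    · rw [Finset.mem_sdiff]
      exact ⟨Finset.mem_univ _, Finset.notMem_erase _ _⟩
  · rintro ⟨I, j⟩ hx
    rw [Finset.mem_sigma] at hx
    obtain ⟨-, hj⟩ := hx
    rw [Finset.mem_sdiff] at hj
    simp [Finset.erase_insert hj.2]
  · rintro ⟨K, j⟩ hx
    rw [Finset.mem_sigma] at hx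
    simp [Finset.insert_erase hx.2]
  · rintro ⟨I, j⟩ hx
    rfl

lemma esymm_le (p : α → ℝ) (hp : ∀ j, 0 ≤ p j) : ∀ r : ℕ,
    (r.factorial : ℝ) * ∑ I ∈ powersetCard r (univ : Finset α), ∏ j ∈ I, p j
      ≤ (∑ j, p j) ^ r := by
  intro r
  induction r with
  | zero => simp
  | succ r ih =>
    have hlnn : 0 ≤ ∑ j, p j := Finset.sum_nonneg fun j _ => hp j
    have key : ((r+1 : ℕ) : ℝ) * ∑ I ∈ powersetCard (r+1) (univ : Finset α), ∏ j ∈ I, p j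
        ≤ (∑ j, p j) * ∑ I ∈ powersetCard r (univ : Finset α), ∏ j ∈ I, p j := by
      have h1 : ∀ I ∈ powersetCard r (univ : Finset α),
          ∑ j ∈ univ \ I, ∏ i ∈ insert j I, p i ≤ (∑ j, p j) * ∏ j ∈ I, p j := by
        intro I hI
        rw [Finset.mem_powersetCard] at hI
        have h2 : ∑ j ∈ univ \ I, ∏ i ∈ insert j I, p i
            = ∑ j ∈ univ \ I, p j * ∏ i ∈ I, p i := by
          refine Finset.sum_congr rfl fun j hj => ?_
          rw [Finset.mem_sdiff] at hj
          rw [Finset.prod_insert hj.2]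
        rw [h2, ← Finset.sum_mul]
        refine mul_le_mul_of_nonneg_right ?_ (Finset.prod_nonneg fun j _ => hp j)
        exact Finset.sum_le_sum_of_subset_of_nonneg (Finset.sdiff_subset)
          (fun j _ _ => hp j)
      have h3 : ∑ I ∈ powersetCard (r+1) (univ : Finset α), ∑ j ∈ I, ∏ i ∈ I, p i
          = ∑ I ∈ powersetCard (r+1) (univ : Finset α), ((r+1 : ℕ) : ℝ) * ∏ i ∈ I, p i := by
        refine Finset.sum_congr rfl fun I hI => ?_
        rw [Finset.mem_powersetCard] at hI
        rw [Finset.sum_const, hI.2, nsmul_eq_mul]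
      calc ((r+1 : ℕ) : ℝ) * ∑ I ∈ powersetCard (r+1) (univ : Finset α), ∏ j ∈ I, p j
          = ∑ I ∈ powersetCard (r+1) (univ : Finset α), ∑ j ∈ I, ∏ i ∈ I, p i := by
            rw [h3, Finset.mul_sum]
        _ = ∑ I ∈ powersetCard r (univ : Finset α), ∑ j ∈ univ \ I, ∏ i ∈ insert j I, p i :=
            (sum_insert_reindex r _).symm
        _ ≤ ∑ I ∈ powersetCard r (univ : Finset α), (∑ j, p j) * ∏ j ∈ I, p j :=
            Finset.sum_le_sum h1
        _ = (∑ j, p j) * ∑ I ∈ powersetCard r (univ : Finset α), ∏ j ∈ I, p j := by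
            rw [Finset.mul_sum]
    have hfact : ((r+1).factorial : ℝ) = ((r+1 : ℕ) : ℝ) * (r.factorial : ℝ) := by
      push_cast [Nat.factorial_succ]; ring
    calc ((r+1).factorial : ℝ) * ∑ I ∈ powersetCard (r+1) (univ : Finset α), ∏ j ∈ I, p j
        = (r.factorial : ℝ) * (((r+1:ℕ) : ℝ) * ∑ I ∈ powersetCard (r+1) (univ : Finset α), ∏ j ∈ I, p j) := by
          rw [hfact]; ring
      _ ≤ (r.factorial : ℝ) * ((∑ j, p j) * ∑ I ∈ powersetCard r (univ : Finset α), ∏ j ∈ I, p j) := by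
          refine mul_le_mul_of_nonneg_left key (by positivity)
      _ = (∑ j, p j) * ((r.factorial : ℝ) * ∑ I ∈ powersetCard r (univ : Finset α), ∏ j ∈ I, p j) := by
          ring
      _ ≤ (∑ j, p j) * (∑ j, p j) ^ r := mul_le_mul_of_nonneg_left ih hlnn
      _ = (∑ j, p j) ^ (r+1) := by ring

end Esymm

section Moments
open Finset
open scoped Classical
variable {n k : ℕ} {Ω : Fin n → Type*} [∀ i, Fintype (Ω i)] [∀ i, Preorder (Ω i)]
variable (A : Fin k → Set (∀ i, Ω i))

lemma maxDisjOcc_mem (ω : ∀ i, Ω i) :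
    ∃ I : Finset (Fin k), I.card = maxDisjOcc A ω ∧ OccurDisjointly A I ω := by
  have hne : {m : ℕ | ∃ I : Finset (Fin k), I.card = m ∧ OccurDisjointly A I ω}.Nonempty :=
    ⟨0, ∅, Finset.card_empty, occur_empty A ω⟩
  have hbdd : BddAbove {m : ℕ | ∃ I : Finset (Fin k), I.card = m ∧ OccurDisjointly A I ω} := by
    refine ⟨k, fun m hm => ?_⟩
    obtain ⟨I, hI, -⟩ := hm
    calc m = I.card := hI.symm
      _ ≤ (Finset.univ : Finset (Fin k)).card := Finset.card_le_univ I
      _ = k := by simp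
  exact Nat.sSup_mem hne hbdd

lemma choose_Xv_le (ω : ∀ i, Ω i) (r : ℕ) :
    ((maxDisjOcc A ω).choose r : ℝ) ≤
      ∑ I ∈ powersetCard r (univ : Finset (Fin k)),
        (if OccurDisjointly A I ω then (1:ℝ) else 0) := by
  classical
  obtain ⟨Imax, hcard, hocc⟩ := maxDisjOcc_mem A ω
  have h1 : Imax.powersetCard r ⊆
      (powersetCard r (univ : Finset (Fin k))).filter (fun I => OccurDisjointly A I ω) := by
    intro J hJ
    rw [Finset.mem_powersetCard] at hJ
    rw [Finset.mem_filter, Finset.mem_powersetCard]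
    exact ⟨⟨Finset.subset_univ _, hJ.2⟩, occur_mono hJ.1 hocc⟩
  have h2 : ((maxDisjOcc A ω).choose r) ≤
      ((powersetCard r (univ : Finset (Fin k))).filter (fun I => OccurDisjointly A I ω)).card := by
    calc (maxDisjOcc A ω).choose r = (Imax.powersetCard r).card := by
          rw [Finset.card_powersetCard, hcard]
      _ ≤ _ := Finset.card_le_card h1
  calc ((maxDisjOcc A ω).choose r : ℝ) ≤
      (((powersetCard r (univ : Finset (Fin k))).filter (fun I => OccurDisjointly A I ω)).card : ℝ) := by
        exact_mod_cast h2
    _ = ∑ I ∈ powersetCard r (univ : Finset (Fin k)), (if OccurDisjointly A I ω then (1:ℝ) else 0) := by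
        rw [Finset.card_filter]
        push_cast
        rfl

variable {w : ∀ i, Ω i → ℝ}

lemma moment_bound (hw0 : ∀ i a, 0 ≤ w i a) (hw1 : ∀ i, ∑ a, w i a = 1)
    (hPA : ∀ i (U V : Set (Ω i)), IsUpperSet U → IsUpperSet V →
      (∑ a, U.indicator (w i) a) * (∑ a, V.indicator (w i) a) ≤
        ∑ a, (U ∩ V).indicator (w i) a)
    (hA : ∀ j, IsUpperSet (A j)) (r : ℕ) :
    ∑ ω : ∀ i, Ω i, (∏ i, w i (ω i)) * ((maxDisjOcc A ω).choose r : ℝ) ≤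
      (∑ j, PW w (A j)) ^ r / (r.factorial : ℝ) := by
  classical
  have hpw : ∀ ω : ∀ i, Ω i, 0 ≤ ∏ i, w i (ω i) :=
    fun ω => Finset.prod_nonneg fun i _ => hw0 i _
  have step1 : ∑ ω : ∀ i, Ω i, (∏ i, w i (ω i)) * ((maxDisjOcc A ω).choose r : ℝ) ≤
      ∑ I ∈ powersetCard r (univ : Finset (Fin k)), PW w {ω | OccurDisjointly A I ω} := by
    calc ∑ ω : ∀ i, Ω i, (∏ i, w i (ω i)) * ((maxDisjOcc A ω).choose r : ℝ)
        ≤ ∑ ω : ∀ i, Ω i, (∏ i, w i (ω i)) *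
            ∑ I ∈ powersetCard r (univ : Finset (Fin k)),
              (if OccurDisjointly A I ω then (1:ℝ) else 0) :=
          Finset.sum_le_sum fun ω _ =>
            mul_le_mul_of_nonneg_left (choose_Xv_le A ω r) (hpw ω)
      _ = ∑ I ∈ powersetCard r (univ : Finset (Fin k)), ∑ ω : ∀ i, Ω i,
            (∏ i, w i (ω i)) * (if OccurDisjointly A I ω then (1:ℝ) else 0) := by
          simp_rw [Finset.mul_sum]
          rw [Finset.sum_comm]
      _ = ∑ I ∈ powersetCard r (univ : Finset (Fin k)), PW w {ω | OccurDisjointly A I ω} := by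
          refine Finset.sum_congr rfl fun I _ => ?_
          rw [PW]
          refine Finset.sum_congr rfl fun ω _ => ?_
          by_cases h : OccurDisjointly A I ω <;>
            simp [Set.indicator_apply, h]
  have step2 : ∑ I ∈ powersetCard r (univ : Finset (Fin k)), PW w {ω | OccurDisjointly A I ω}
      ≤ ∑ I ∈ powersetCard r (univ : Finset (Fin k)), ∏ j ∈ I, PW w (A j) :=
    Finset.sum_le_sum fun I _ => PW_occur_le_prod w hw0 hw1 hPA A hA I
  have step3 : ∑ I ∈ powersetCard r (univ : Finset (Fin k)), ∏ j ∈ I, PW w (A j)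
      ≤ (∑ j, PW w (A j)) ^ r / (r.factorial : ℝ) := by
    rw [le_div_iff₀ (by positivity : (0:ℝ) < (r.factorial : ℝ))]
    calc (∑ I ∈ powersetCard r (univ : Finset (Fin k)), ∏ j ∈ I, PW w (A j)) * (r.factorial : ℝ)
        = (r.factorial : ℝ) * ∑ I ∈ powersetCard r (univ : Finset (Fin k)), ∏ j ∈ I, PW w (A j) := by
          ring
      _ ≤ (∑ j, PW w (A j)) ^ r := esymm_le _ (fun j => PW_nonneg hw0 (A j)) r
  linarith

lemma mgf_bound (hw0 : ∀ i a, 0 ≤ w i a) (hw1 : ∀ i, ∑ a, w i a = 1)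
    (hPA : ∀ i (U V : Set (Ω i)), IsUpperSet U → IsUpperSet V →
      (∑ a, U.indicator (w i) a) * (∑ a, V.indicator (w i) a) ≤
        ∑ a, (U ∩ V).indicator (w i) a)
    (hA : ∀ j, IsUpperSet (A j)) {u : ℝ} (hu : 0 ≤ u) :
    ∑ ω : ∀ i, Ω i, (∏ i, w i (ω i)) * (1 + u) ^ (maxDisjOcc A ω) ≤
      Real.exp (u * ∑ j, PW w (A j)) := by
  classical
  have hpw : ∀ ω : ∀ i, Ω i, 0 ≤ ∏ i, w i (ω i) :=
    fun ω => Finset.prod_nonneg fun i _ => hw0 i _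
  have hXk : ∀ ω : ∀ i, Ω i, maxDisjOcc A ω ≤ k := by
    intro ω
    obtain ⟨I, hI, -⟩ := maxDisjOcc_mem A ω
    calc maxDisjOcc A ω = I.card := hI.symm
      _ ≤ (Finset.univ : Finset (Fin k)).card := Finset.card_le_univ I
      _ = k := by simp
  have hbinom : ∀ ω : ∀ i, Ω i, (1 + u) ^ (maxDisjOcc A ω) =
      ∑ r ∈ Finset.range (k+1), ((maxDisjOcc A ω).choose r : ℝ) * u ^ r := by
    intro ω
    have h1 : (u + 1) ^ (maxDisjOcc A ω) =
        ∑ r ∈ Finset.range (maxDisjOcc A ω + 1), u ^ r * ((maxDisjOcc A ω).choose r : ℝ) := by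
      rw [add_pow]
      refine Finset.sum_congr rfl fun r _ => by rw [one_pow]; ring
    have h2 : ∑ r ∈ Finset.range (maxDisjOcc A ω + 1), u ^ r * ((maxDisjOcc A ω).choose r : ℝ)
        = ∑ r ∈ Finset.range (k+1), u ^ r * ((maxDisjOcc A ω).choose r : ℝ) := by
      refine Finset.sum_subset (by
        intro r hr
        rw [Finset.mem_range] at *
        have := hXk ω
        omega) ?_
      intro r _ hr
      rw [Finset.mem_range, not_lt] at hr
      rw [Nat.choose_eq_zero_of_lt (by omega)]
      simp
    rw [show (1 + u) = (u + 1) by ring, h1, h2]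
    exact Finset.sum_congr rfl fun r _ => by ring
  calc ∑ ω : ∀ i, Ω i, (∏ i, w i (ω i)) * (1 + u) ^ (maxDisjOcc A ω)
      = ∑ r ∈ Finset.range (k+1), u ^ r *
          ∑ ω : ∀ i, Ω i, (∏ i, w i (ω i)) * ((maxDisjOcc A ω).choose r : ℝ) := by
        simp_rw [hbinom, Finset.mul_sum]
        rw [Finset.sum_comm]
        refine Finset.sum_congr rfl fun r _ => ?_
        refine Finset.sum_congr rfl fun ω _ => by ring
    _ ≤ ∑ r ∈ Finset.range (k+1), (u * ∑ j, PW w (A j)) ^ r / (r.factorial : ℝ) := by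
        refine Finset.sum_le_sum fun r _ => ?_
        calc u ^ r * ∑ ω : ∀ i, Ω i, (∏ i, w i (ω i)) * ((maxDisjOcc A ω).choose r : ℝ)
            ≤ u ^ r * ((∑ j, PW w (A j)) ^ r / (r.factorial : ℝ)) :=
              mul_le_mul_of_nonneg_left (moment_bound A hw0 hw1 hPA hA r) (by positivity)
          _ = (u * ∑ j, PW w (A j)) ^ r / (r.factorial : ℝ) := by
              rw [mul_pow]; ring
    _ ≤ Real.exp (u * ∑ j, PW w (A j)) := by
        refine Real.sum_le_exp_of_nonneg ?_ (k+1)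
        have : 0 ≤ ∑ j, PW w (A j) := Finset.sum_nonneg fun j _ => PW_nonneg hw0 (A j)
        positivity

theorem chernoff_comb (hw0 : ∀ i a, 0 ≤ w i a) (hw1 : ∀ i, ∑ a, w i a = 1)
    (hPA : ∀ i (U V : Set (Ω i)), IsUpperSet U → IsUpperSet V →
      (∑ a, U.indicator (w i) a) * (∑ a, V.indicator (w i) a) ≤
        ∑ a, (U ∩ V).indicator (w i) a)
    (hA : ∀ j, IsUpperSet (A j)) {t : ℝ} (ht : 0 ≤ t)
    (hlam : 0 < ∑ j, PW w (A j)) :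
    PW w {ω | (∑ j, PW w (A j)) + t ≤ (maxDisjOcc A ω : ℝ)} ≤
      Real.exp (-((∑ j, PW w (A j)) * chernoffPhi (t / (∑ j, PW w (A j))))) := by
  classical
  set lam := ∑ j, PW w (A j) with hlamdef
  set u := t / lam with hu
  have hu0 : 0 ≤ u := div_nonneg ht (le_of_lt hlam)
  have h1u : (1:ℝ) ≤ 1 + u := by linarith
  have h1upos : (0:ℝ) < 1 + u := by linarith
  have hul : u * lam = t := by
    rw [hu]; field_simp
  have hpw : ∀ ω : ∀ i, Ω i, 0 ≤ ∏ i, w i (ω i) :=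
    fun ω => Finset.prod_nonneg fun i _ => hw0 i _
  set c := (1 + u) ^ (lam + t) with hc
  have hcpos : 0 < c := Real.rpow_pos_of_pos h1upos _
  have key : PW w {ω | lam + t ≤ (maxDisjOcc A ω : ℝ)} * c ≤ Real.exp t := by
    calc PW w {ω | lam + t ≤ (maxDisjOcc A ω : ℝ)} * c
        = ∑ ω : ∀ i, Ω i,
            ({ω | lam + t ≤ (maxDisjOcc A ω : ℝ)}.indicator (fun ω => ∏ i, w i (ω i)) ω) * c := by
          rw [PW, Finset.sum_mul]
      _ ≤ ∑ ω : ∀ i, Ω i, (∏ i, w i (ω i)) * (1 + u) ^ (maxDisjOcc A ω) := by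
          refine Finset.sum_le_sum fun ω _ => ?_
          by_cases h : lam + t ≤ (maxDisjOcc A ω : ℝ)
          · rw [Set.indicator_of_mem (show ω ∈ {ω | lam + t ≤ (maxDisjOcc A ω : ℝ)} from h)]
            refine mul_le_mul_of_nonneg_left ?_ (hpw ω)
            calc c ≤ (1 + u) ^ ((maxDisjOcc A ω : ℝ)) :=
                  Real.rpow_le_rpow_of_exponent_le h1u h
              _ = (1 + u) ^ (maxDisjOcc A ω) := Real.rpow_natCast _ _
          · rw [Set.indicator_of_notMem (show ω ∉ {ω | lam + t ≤ (maxDisjOcc A ω : ℝ)} from h)]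
            rw [zero_mul]
            exact mul_nonneg (hpw ω) (pow_nonneg (by linarith) _)
      _ ≤ Real.exp (u * lam) := mgf_bound A hw0 hw1 hPA hA hu0
      _ = Real.exp t := by rw [hul]
  have h2 : PW w {ω | lam + t ≤ (maxDisjOcc A ω : ℝ)} ≤ Real.exp t / c :=
    (le_div_iff₀ hcpos).mpr key
  have h3 : Real.exp t / c = Real.exp (-(lam * chernoffPhi u)) := by
    rw [hc, Real.rpow_def_of_pos h1upos, ← Real.exp_sub]
    congr 1
    have : lam * chernoffPhi u = (lam + t) * Real.log (1 + u) - t := by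
      rw [chernoffPhi]
      have h4 : lam * u = t := by rw [mul_comm]; exact hul
      linear_combination (Real.log (1 + u) - 1) * h4
    linarith [this]
  rw [← h3]
  exact h2

end Moments

section Bridge
open MeasureTheory

lemma measure_toReal_eq_sum {α : Type*} [Fintype α] [MeasurableSpace α]
    [MeasurableSingletonClass α] (μ : Measure α) [IsProbabilityMeasure μ] (s : Set α) :
    (μ s).toReal = ∑ a, s.indicator (fun a => (μ {a}).toReal) a := by
  classical
  have h2 : μ s = ∑ a ∈ s.toFinset, μ {a} := by
    conv_lhs => rw [show s = ⋃ a ∈ s.toFinset, ({a} : Set α) by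
      simp [Set.biUnion_of_singleton]]
    exact measure_biUnion_finset
      (fun a _ b _ hab => by simpa [Set.disjoint_singleton_left] using hab)
      (fun b _ => measurableSet_singleton b)
  rw [h2, ENNReal.toReal_sum (fun a _ => measure_ne_top μ _)]
  rw [Finset.sum_indicator_eq_sum_filter]
  apply Finset.sum_congr _ (fun a _ => rfl)
  ext a
  simp [Set.mem_toFinset]

lemma pi_singleton_toReal {n : ℕ} {Ω : Fin n → Type*} [∀ i, Fintype (Ω i)]
    [∀ i, MeasurableSpace (Ω i)] [∀ i, MeasurableSingletonClass (Ω i)]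
    (μi : ∀ i, Measure (Ω i)) [∀ i, IsProbabilityMeasure (μi i)] (ω : ∀ i, Ω i) :
    ((Measure.pi μi) {ω}).toReal = ∏ i, (μi i {ω i}).toReal := by
  rw [show ({ω} : Set (∀ i, Ω i)) = Set.pi Set.univ (fun i => {ω i}) from
    (Set.univ_pi_singleton ω).symm]
  rw [Measure.pi_pi]
  exact ENNReal.toReal_prod _ _

lemma pi_toReal_eq_PW {n : ℕ} {Ω : Fin n → Type*} [∀ i, Fintype (Ω i)]
    [∀ i, MeasurableSpace (Ω i)] [∀ i, MeasurableSingletonClass (Ω i)]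
    (μi : ∀ i, Measure (Ω i)) [∀ i, IsProbabilityMeasure (μi i)] (s : Set (∀ i, Ω i)) :
    ((Measure.pi μi) s).toReal = PW (fun i a => (μi i {a}).toReal) s := by
  rw [measure_toReal_eq_sum (Measure.pi μi) s, PW]
  refine Finset.sum_congr rfl fun ω _ => ?_
  by_cases h : ω ∈ s
  · rw [Set.indicator_of_mem h, Set.indicator_of_mem h, pi_singleton_toReal]
  · rw [Set.indicator_of_notMem h, Set.indicator_of_notMem h]

lemma factor_toReal_eq_sum {α : Type*} [Fintype α] [MeasurableSpace α]
    [MeasurableSingletonClass α] (μ : Measure α) [IsProbabilityMeasure μ] (s : Set α) :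
    (μ s).toReal = ∑ a, s.indicator (fun a => (μ {a}).toReal) a :=
  measure_toReal_eq_sum μ s

end Bridge

section Final
open MeasureTheory Finset

/-- **Chernoff-type upper tail bound for disjoint occurrence of increasing events.**
In a finite product probability space with positively associated factors, if
`A 1, …, A k` are increasing events, `X` is the maximal number of them occurring
disjointly, and `λ = Σ μ(A i)`, then for `t ≥ 0`,
`Pr(X ≥ λ + t) ≤ exp(−λ φ(t/λ))`. -/
theorem extended_BK_chernoff
    {n k : ℕ} {Ω : Fin n → Type*}
    [∀ i, Fintype (Ω i)] [∀ i, PartialOrder (Ω i)]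
    [∀ i, MeasurableSpace (Ω i)] [∀ i, MeasurableSingletonClass (Ω i)]
    (μi : ∀ i, Measure (Ω i)) [∀ i, IsProbabilityMeasure (μi i)]
    (hPA : ∀ i, PositivelyAssociated (μi i))
    (A : Fin k → Set (∀ i, Ω i))
    (hA : ∀ j, IsUpperSet (A j))
    (lam : ℝ) (hlam : lam = ∑ i, (Measure.pi μi (A i)).toReal) :
    ∀ t : ℝ, 0 ≤ t →
      (Measure.pi μi {ω | lam + t ≤ (maxDisjOcc A ω : ℝ)}).toReal ≤
        Real.exp (-(lam * chernoffPhi (t / lam))) := by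
  intro t ht
  classical
  have hlam0 : 0 ≤ lam := by
    rw [hlam]; exact Finset.sum_nonneg fun j _ => ENNReal.toReal_nonneg
  have hw0 : ∀ (i : Fin n) (a : Ω i), 0 ≤ (μi i {a}).toReal :=
    fun i a => ENNReal.toReal_nonneg
  have hw1 : ∀ i : Fin n, ∑ a, (μi i {a}).toReal = 1 := by
    intro i
    have h := measure_toReal_eq_sum (μi i) Set.univ
    rw [measure_univ, ENNReal.toReal_one, Set.indicator_univ] at h
    exact h.symm
  have hPAw : ∀ (i : Fin n) (U V : Set (Ω i)), IsUpperSet U → IsUpperSet V →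
      (∑ a, U.indicator (fun a => (μi i {a}).toReal) a) *
        (∑ a, V.indicator (fun a => (μi i {a}).toReal) a) ≤
      ∑ a, (U ∩ V).indicator (fun a => (μi i {a}).toReal) a := by
    intro i U V hU hV
    have h2 : ((μi i) U).toReal * ((μi i) V).toReal ≤ ((μi i) (U ∩ V)).toReal := by
      rw [← ENNReal.toReal_mul]
      exact ENNReal.toReal_mono (measure_ne_top _ _) (hPA i U V hU hV)
    rwa [measure_toReal_eq_sum, measure_toReal_eq_sum, measure_toReal_eq_sum] at h2
  have hlam' : lam = ∑ j, PW (fun (i : Fin n) (a : Ω i) => (μi i {a}).toReal) (A j) := by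
    rw [hlam]
    exact Finset.sum_congr rfl fun j _ => pi_toReal_eq_PW μi (A j)
  have hLHS : ((Measure.pi μi) {ω | lam + t ≤ (maxDisjOcc A ω : ℝ)}).toReal
      = PW (fun (i : Fin n) (a : Ω i) => (μi i {a}).toReal)
          {ω | lam + t ≤ (maxDisjOcc A ω : ℝ)} :=
    pi_toReal_eq_PW μi _
  rcases eq_or_lt_of_le hlam0 with h0 | hpos
  · -- lam = 0
    calc ((Measure.pi μi) {ω | lam + t ≤ (maxDisjOcc A ω : ℝ)}).toReal
        ≤ (1 : ENNReal).toReal := ENNReal.toReal_mono ENNReal.one_ne_top prob_le_one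
      _ = 1 := ENNReal.toReal_one
      _ = Real.exp (-(lam * chernoffPhi (t / lam))) := by
          rw [← h0, zero_mul, neg_zero, Real.exp_zero]
  · -- lam > 0
    have hres := chernoff_comb A hw0 hw1 hPAw hA ht (hlam' ▸ hpos)
    rw [hLHS, hlam']
    exact hres
end Final
end
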